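/- arXiv:2404.14002 — 14 statements merged into one kernel-verified Lean document; each statement's English description precedes it below -/
import Mathlib

section
/- Let x, y ∈ X and a, b, m, n ∈ P be such that ab⁻¹ = mn⁻¹ in G. Then θ_a(x) = θ_b(y) if and only if θ_m(x) = θ_n(y). -/
/-- For a right injective action `θ` of an Ore subsemigroup `P ⊆ G` on a
second-countable compact Hausdorff space `X`: if `a * b⁻¹ = m * n⁻¹` with `a,b,m,n ∈ P`,
then `θ_a x = θ_b y ↔ θ_m x = θ_n y`. -/
theorem stmt_0 {G : Type*} [Group G] [Countable G]
    {X : Type*} [TopologicalSpace X] [CompactSpace X] [T2Space X]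
    [SecondCountableTopology X]
    (P : Set G) (hP1 : (1 : G) ∈ P) (hPmul : ∀ a ∈ P, ∀ b ∈ P, a * b ∈ P)
    (hPG : ∀ g : G, ∃ a ∈ P, ∃ b ∈ P, g = a * b⁻¹)
    (θ : G → X → X)
    (hθc : ∀ a ∈ P, Continuous (θ a))
    (hθi : ∀ a ∈ P, Function.Injective (θ a))
    (hθ1 : θ 1 = id)
    (hθm : ∀ a ∈ P, ∀ b ∈ P, ∀ x : X, θ a (θ b x) = θ (b * a) x)
    (x y : X) (a b m n : G) (ha : a ∈ P) (hb : b ∈ P) (hm : m ∈ P) (hn : n ∈ P)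
    (h : a * b⁻¹ = m * n⁻¹) :
    θ a x = θ b y ↔ θ m x = θ n y := by
  have key : ∀ a b m n : G, a ∈ P → b ∈ P → m ∈ P → n ∈ P →
      a * b⁻¹ = m * n⁻¹ → θ a x = θ b y → θ m x = θ n y := by
    intro a b m n ha hb hm hn h hxy
    obtain ⟨c, hc, d, hd, hcd⟩ := hPG (a⁻¹ * m)
    have hba : b * a⁻¹ = n * m⁻¹ := by
      have := congrArg (·⁻¹) h
      simpa [mul_inv_rev] using this
    have h1 : a * c = m * d := by
      calc a * c = a * (c * d⁻¹) * d := by simp [mul_assoc]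
        _ = a * (a⁻¹ * m) * d := by rw [← hcd]
        _ = m * d := by simp [mul_assoc]
    have h2 : b * c = n * d := by
      calc b * c = b * (c * d⁻¹) * d := by simp [mul_assoc]
        _ = b * (a⁻¹ * m) * d := by rw [← hcd]
        _ = (b * a⁻¹) * (m * d) := by simp [mul_assoc]
        _ = n * m⁻¹ * (m * d) := by rw [hba]
        _ = n * d := by simp [mul_assoc]
    apply hθi d hd
    calc θ d (θ m x) = θ (m * d) x := hθm d hd m hm x
      _ = θ (a * c) x := by rw [← h1]
      _ = θ c (θ a x) := (hθm c hc a ha x).symm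
      _ = θ c (θ b y) := by rw [hxy]
      _ = θ (b * c) y := hθm c hc b hb y
      _ = θ (n * d) y := by rw [h2]
      _ = θ d (θ n y) := (hθm d hd n hn y).symm
  exact ⟨key a b m n ha hb hm hn h, key m n a b hm hn ha hb h.symm⟩
end

section
/- For every x ∈ X and every g ∈ Q_x there exists a unique point y ∈ X with the property that for all a, b ∈ P with g = ab⁻¹ one has θ_a(x) = θ_b(y). -/
/-- `Q_x`: the set of `g ∈ G` expressible as `a * b⁻¹` with `a, b ∈ P` such that
`θ_a x = θ_b y` for some `y ∈ X`. -/
def Qset {G X : Type*} [Group G] (P : Set G) (θ : G → X → X) (x : X) : Set G :=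
  {g : G | ∃ a ∈ P, ∃ b ∈ P, ∃ y : X, g = a * b⁻¹ ∧ θ a x = θ b y}

/-- for every `x ∈ X` and every `g ∈ Q_x` there is a unique `y ∈ X` such that
for all `a, b ∈ P` with `g = a * b⁻¹` one has `θ_a x = θ_b y`. -/
theorem stmt_1 {G : Type*} [Group G] [Countable G]
    {X : Type*} [TopologicalSpace X] [CompactSpace X] [T2Space X]
    [SecondCountableTopology X]
    (P : Set G) (hP1 : (1 : G) ∈ P) (hPmul : ∀ a ∈ P, ∀ b ∈ P, a * b ∈ P)
    (hPG : ∀ g : G, ∃ a ∈ P, ∃ b ∈ P, g = a * b⁻¹)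
    (θ : G → X → X)
    (hθc : ∀ a ∈ P, Continuous (θ a))
    (hθi : ∀ a ∈ P, Function.Injective (θ a))
    (hθ1 : θ 1 = id)
    (hθm : ∀ a ∈ P, ∀ b ∈ P, ∀ x : X, θ a (θ b x) = θ (b * a) x) :
    ∀ x : X, ∀ g ∈ Qset P θ x,
      ∃! y : X, ∀ a ∈ P, ∀ b ∈ P, g = a * b⁻¹ → θ a x = θ b y := by
  intro x g hg
  obtain ⟨a₀, ha₀, b₀, hb₀, y₀, hg0, hxy0⟩ := hg
  refine ⟨y₀, ?_, ?_⟩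
  · intro a ha b hb hgab
    -- find c, d ∈ P with b⁻¹ * b₀ = c * d⁻¹, i.e. b₀ * d = b * c
    obtain ⟨c, hc, d, hd, hcd⟩ := hPG (b⁻¹ * b₀)
    have hbd : b₀ * d = b * c := by
      have hb0 : b₀ = b * (c * d⁻¹) := by rw [← hcd]; group
      rw [hb0]; group
    have hac : a * c = a₀ * d := by
      have ha' : a = g * b := by rw [hgab]; group
      have ha₀' : a₀ = g * b₀ := by rw [hg0]; group
      rw [ha', ha₀', mul_assoc, mul_assoc, hbd]
    -- θ_c (θ_a x) = θ (a*c) x = θ (a₀*d) x = θ_d (θ_{a₀} x) = θ_d (θ_{b₀} y₀)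
    --            = θ (b₀*d) y₀ = θ (b*c) y₀ = θ_c (θ_b y₀)
    apply hθi c hc
    calc θ c (θ a x) = θ (a * c) x := hθm c hc a ha x
      _ = θ (a₀ * d) x := by rw [hac]
      _ = θ d (θ a₀ x) := (hθm d hd a₀ ha₀ x).symm
      _ = θ d (θ b₀ y₀) := by rw [hxy0]
      _ = θ (b₀ * d) y₀ := hθm d hd b₀ hb₀ y₀
      _ = θ (b * c) y₀ := by rw [hbd]
      _ = θ c (θ b y₀) := (hθm c hc b hb y₀).symm
  · intro y' hy'
    have h := hy' a₀ ha₀ b₀ hb₀ hg0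
    exact hθi b₀ hb₀ (h.symm.trans hxy0)
end

section
/- The map u : X ⋊ P → X, (x, g) ↦ u(x, g), is continuous, where X ⋊ P carries the subspace topology from X × G with G discrete. -/
/-- the map `u : X ⋊ P → X`, `(x, g) ↦ u(x, g)`, is continuous, where the
transformation groupoid `X ⋊ P = {(x, g) : g ∈ Q_x}` carries the subspace topology from
`X × G` with `G` discrete. -/
theorem stmt_2 {G : Type*} [Group G] [Countable G]
    [TopologicalSpace G] [DiscreteTopology G]
    {X : Type*} [TopologicalSpace X] [CompactSpace X] [T2Space X]
    [SecondCountableTopology X]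
    (P : Set G) (hP1 : (1 : G) ∈ P) (hPmul : ∀ a ∈ P, ∀ b ∈ P, a * b ∈ P)
    (hPG : ∀ g : G, ∃ a ∈ P, ∃ b ∈ P, g = a * b⁻¹)
    (θ : G → X → X)
    (hθc : ∀ a ∈ P, Continuous (θ a))
    (hθi : ∀ a ∈ P, Function.Injective (θ a))
    (hθ1 : θ 1 = id)
    (hθm : ∀ a ∈ P, ∀ b ∈ P, ∀ x : X, θ a (θ b x) = θ (b * a) x)
    (u : X → G → X)
    (hu : ∀ x : X, ∀ g ∈ Qset P θ x, ∀ a ∈ P, ∀ b ∈ P,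
      g = a * b⁻¹ → θ a x = θ b (u x g)) :
    Continuous fun p : {q : X × G // q.2 ∈ Qset P θ q.1} => u p.1.1 p.1.2 := by
  rw [continuous_iff_continuousAt]
  intro p
  obtain ⟨a, ha, b, hb, y, hg, hxy⟩ := p.2
  have hemb : Topology.IsEmbedding (θ b) :=
    ((hθc b hb).isClosedEmbedding (hθi b hb)).toIsEmbedding
  rw [ContinuousAt, hemb.tendsto_nhds_iff]
  have hopen : IsOpen {q : {q : X × G // q.2 ∈ Qset P θ q.1} | q.1.2 = p.1.2} := by
    have hc : Continuous fun q : {q : X × G // q.2 ∈ Qset P θ q.1} => q.1.2 :=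
      continuous_snd.comp continuous_subtype_val
    exact (isOpen_discrete {p.1.2}).preimage hc
  have hev : ∀ᶠ q in nhds p,
      θ a q.1.1 = θ b (u q.1.1 q.1.2) := by
    filter_upwards [hopen.mem_nhds rfl] with q hq
    exact hu q.1.1 q.1.2 q.2 a ha b hb (by rw [hq, hg])
  have hlim : Filter.Tendsto (fun q : {q : X × G // q.2 ∈ Qset P θ q.1} => θ a q.1.1)
      (nhds p) (nhds (θ b (u p.1.1 p.1.2))) := by
    have := hu p.1.1 p.1.2 p.2 a ha b hb hg
    rw [← this]
    exact ((hθc a ha).comp (continuous_fst.comp continuous_subtype_val)).continuousAt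
  exact hlim.congr' hev
end

section
/- The following are equivalent: (i) θ_a(X) is open in X for every a ∈ P; (ii) the range map r : X ⋊ P → X, r(x, g) = x, and the source map s : X ⋊ P → X, s(x, g) = u(x, g), are both local homeomorphisms (i.e., the groupoid X ⋊ P is étale over its unit space X). -/
/-- `θ_a(X)` is open for every `a ∈ P` if and only if the range map
`r(x, g) = x` and the source map `s(x, g) = u(x, g)` of the transformation groupoid
`X ⋊ P` are local homeomorphisms (i.e. `X ⋊ P` is étale over its unit space `X`). -/
theorem stmt_4 {G : Type*} [Group G] [Countable G]
    [TopologicalSpace G] [DiscreteTopology G]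
    {X : Type*} [TopologicalSpace X] [CompactSpace X] [T2Space X]
    [SecondCountableTopology X]
    (P : Set G) (hP1 : (1 : G) ∈ P) (hPmul : ∀ a ∈ P, ∀ b ∈ P, a * b ∈ P)
    (hPG : ∀ g : G, ∃ a ∈ P, ∃ b ∈ P, g = a * b⁻¹)
    (θ : G → X → X)
    (hθc : ∀ a ∈ P, Continuous (θ a))
    (hθi : ∀ a ∈ P, Function.Injective (θ a))
    (hθ1 : θ 1 = id)
    (hθm : ∀ a ∈ P, ∀ b ∈ P, ∀ x : X, θ a (θ b x) = θ (b * a) x)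
    (u : X → G → X)
    (hu : ∀ x : X, ∀ g ∈ Qset P θ x, ∀ a ∈ P, ∀ b ∈ P,
      g = a * b⁻¹ → θ a x = θ b (u x g)) :
    (∀ a ∈ P, IsOpen (Set.range (θ a))) ↔
      (IsLocalHomeomorph (fun p : {q : X × G // q.2 ∈ Qset P θ q.1} => p.1.1) ∧
       IsLocalHomeomorph (fun p : {q : X × G // q.2 ∈ Qset P θ q.1} => u p.1.1 p.1.2)) := by
  set Z := {q : X × G // q.2 ∈ Qset P θ q.1} with hZ
  -- the slice over `g` is open in `Z`
  have hUopen : ∀ g : G, IsOpen {q : Z | q.1.2 = g} := fun g =>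
    (isOpen_discrete ({g} : Set G)).preimage
      (continuous_snd.comp continuous_subtype_val)
  constructor
  · intro hopen
    -- the domain of the slice over `g` is open in `X`
    have hD : ∀ g : G, IsOpen {x : X | g ∈ Qset P θ x} := by
      intro g
      rw [isOpen_iff_mem_nhds]
      rintro x ⟨a, ha, b, hb, y, hg, hxy⟩
      have h1 : IsOpen (θ a ⁻¹' Set.range (θ b)) := (hopen b hb).preimage (hθc a ha)
      refine Filter.mem_of_superset (h1.mem_nhds ⟨y, hxy.symm⟩) ?_
      rintro x' ⟨y', hy'⟩
      exact ⟨a, ha, b, hb, y', hg, hy'.symm⟩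
    have hOE : ∀ a ∈ P, Topology.IsOpenEmbedding (θ a) := fun a ha =>
      ⟨((hθc a ha).isClosedEmbedding (hθi a ha)).toIsEmbedding, hopen a ha⟩
    -- the slice over `g` is homeomorphic to its domain, compatibly with `r`
    have key : ∀ g : G, Topology.IsOpenEmbedding
        (Set.restrict {q : Z | q.1.2 = g} (fun p : Z => p.1.1)) := by
      intro g
      let h : Homeomorph {q : Z | q.1.2 = g} {x : X | g ∈ Qset P θ x} :=
        { toFun := fun q => ⟨q.1.1.1, by have hq := q.1.2; rw [q.2] at hq; exact hq⟩
          invFun := fun x => ⟨⟨(x.1, g), x.2⟩, rfl⟩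
          left_inv := by
            rintro ⟨⟨⟨x, g'⟩, hq⟩, (hg' : g' = g)⟩
            subst hg'; rfl
          right_inv := fun x => rfl
          continuous_toFun := by
            apply Continuous.subtype_mk
            exact continuous_fst.comp (continuous_subtype_val.comp continuous_subtype_val)
          continuous_invFun := by
            apply Continuous.subtype_mk
            apply Continuous.subtype_mk
            exact continuous_subtype_val.prodMk continuous_const }
      exact ((hD g).isOpenEmbedding_subtypeVal).comp h.isOpenEmbedding
    have hr : IsLocalHomeomorph (fun p : Z => p.1.1) := by
      rw [isLocalHomeomorph_iff_isOpenEmbedding_restrict]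
      intro p
      exact ⟨{q : Z | q.1.2 = p.1.2}, (hUopen p.1.2).mem_nhds rfl, key p.1.2⟩
    refine ⟨hr, ?_⟩
    -- the source map
    rw [isLocalHomeomorph_iff_isOpenEmbedding_restrict]
    intro p
    obtain ⟨a, ha, b, hb, y, hg, hxy⟩ := p.2
    set g := p.1.2 with hgdef
    refine ⟨{q : Z | q.1.2 = g}, (hUopen g).mem_nhds rfl, ?_⟩
    set U : Set Z := {q : Z | q.1.2 = g} with hU
    set F : U → X := Set.restrict U (fun p : Z => u p.1.1 p.1.2) with hF
    -- on the slice, `θ b ∘ F = θ a ∘ r`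
    have hmem : ∀ q : U, (g : G) ∈ Qset P θ q.1.1.1 := fun q => q.2 ▸ q.1.2
    have hkey : ∀ q : U, θ b (F q) = θ a q.1.1.1 := by
      intro q
      have := hu q.1.1.1 g (hmem q) a ha b hb hg
      rw [hF]; show θ b (u q.1.1.1 q.1.1.2) = θ a q.1.1.1
      rw [q.2]
      exact this.symm
    rw [Topology.isOpenEmbedding_iff_continuous_injective_isOpenMap]
    have hρ : Topology.IsOpenEmbedding (Set.restrict U (fun p : Z => p.1.1)) := key g
    refine ⟨?_, ?_, ?_⟩
    · -- continuity via the embedding `θ b`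
      rw [(hOE b hb).isEmbedding.continuous_iff]
      have : (θ b ∘ F) = fun q : U => θ a q.1.1.1 := funext fun q => hkey q
      change Continuous (θ b ∘ F); rw [this]
      exact (hθc a ha).comp hρ.continuous
    · -- injectivity
      intro q q' hqq'
      have h1 : θ a q.1.1.1 = θ a q'.1.1.1 := by
        rw [← hkey q, ← hkey q', show F q = F q' from hqq']
      have h2 : q.1.1.1 = q'.1.1.1 := hθi a ha h1
      have h3 : q.1.1.2 = q'.1.1.2 := by rw [q.2, q'.2]
      exact Subtype.ext (Subtype.ext (Prod.ext h2 h3))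
    · -- openness
      intro V hV
      have himg : F '' V = θ b ⁻¹' (θ a '' (Set.restrict U (fun p : Z => p.1.1) '' V)) := by
        ext z
        constructor
        · rintro ⟨q, hq, rfl⟩
          exact ⟨q.1.1.1, ⟨q, hq, rfl⟩, (hkey q).symm⟩
        · rintro ⟨x, ⟨q, hq, rfl⟩, hz⟩
          have : θ b z = θ b (F q) := by rw [hkey q]; exact hz.symm
          exact ⟨q, hq, (hθi b hb this).symm⟩
      change IsOpen (F '' V); rw [himg]
      exact ((hOE a ha).isOpenMap _ (hρ.isOpenMap _ hV)).preimage (hθc b hb)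
  · rintro ⟨hr, -⟩ a ha
    have hchar : Set.range (θ a) = {x : X | (a⁻¹ : G) ∈ Qset P θ x} := by
      ext x
      constructor
      · rintro ⟨y, rfl⟩
        exact ⟨1, hP1, a, ha, y, (one_mul _).symm, by rw [hθ1]; rfl⟩
      · intro hx
        have := hu x a⁻¹ hx 1 hP1 a ha (one_mul _).symm
        rw [hθ1] at this
        exact ⟨u x a⁻¹, this.symm⟩
    have himg : (fun p : Z => p.1.1) '' {q : Z | q.1.2 = a⁻¹}
        = {x : X | (a⁻¹ : G) ∈ Qset P θ x} := by
      ext x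
      constructor
      · rintro ⟨q, hq, rfl⟩
        exact hq ▸ q.2
      · intro hx
        exact ⟨⟨(x, a⁻¹), hx⟩, rfl, rfl⟩
    rw [hchar, ← himg]
    exact hr.isOpenMap _ (hUopen a⁻¹)
end

section
/- The relation (x, g) ∼ (y, h) ⟺ there exist a, b ∈ P with gh⁻¹ = ab⁻¹ and θ_a(x) = θ_b(y) is an equivalence relation on X × G; the quotient space X̃ is locally compact Hausdorff; the quotient map π : X × G → X̃ is continuous, surjective and open; the set X' = {[x, e] : x ∈ X} is clopen in X̃, the map x ↦ [x, e] is injective, and X' is full for the action θ̃, i.e., for every [x, g] ∈ X̃ there exists h ∈ G with θ̃_h([x, g]) ∈ X'. -/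
/-- The equivalence relation on `X × G`:
`(x, g) ∼ (y, h) ↔ ∃ a b ∈ P, g * h⁻¹ = a * b⁻¹ ∧ θ_a x = θ_b y`. -/
def XGrel {G X : Type*} [Group G] (P : Set G) (θ : G → X → X) :
    X × G → X × G → Prop :=
  fun p q => ∃ a ∈ P, ∃ b ∈ P, p.2 * q.2⁻¹ = a * b⁻¹ ∧ θ a p.1 = θ b q.1

section Aux

variable {G : Type*} [Group G] {X : Type*} [TopologicalSpace X] [CompactSpace X] [T2Space X]

/-- For `a ∈ P`, the map `θ a` is an open map: it is a continuous injection of a compact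
Hausdorff space into itself with open range. -/
lemma theta_isOpenMap (P : Set G) (θ : G → X → X)
    (hθc : ∀ a ∈ P, Continuous (θ a)) (hθi : ∀ a ∈ P, Function.Injective (θ a))
    (hopen : ∀ a ∈ P, IsOpen (Set.range (θ a))) {a : G} (ha : a ∈ P) :
    IsOpenMap (θ a) := by
  intro U hU
  have h1 : θ a '' U = Set.range (θ a) ∩ (θ a '' Uᶜ)ᶜ := by
    ext z
    constructor
    · rintro ⟨x, hx, rfl⟩
      refine ⟨⟨x, rfl⟩, ?_⟩
      rintro ⟨x', hx', hx'e⟩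
      exact hx' (hθi a ha hx'e ▸ hx)
    · rintro ⟨⟨x, rfl⟩, hz⟩
      exact ⟨x, by_contra fun hx => hz ⟨x, hx, rfl⟩, rfl⟩
  rw [h1]
  exact (hopen a ha).inter
    ((hU.isClosed_compl.isCompact.image (hθc a ha)).isClosed.isOpen_compl)

/-- Independence of the witness pair: if `a * b⁻¹ = a' * b'⁻¹` with all elements in `P`,
then `θ a x = θ b y` implies `θ a' x = θ b' y`. -/
lemma pair_indep {G : Type*} [Group G] {X : Type*} (P : Set G) (θ : G → X → X)
    (hPG : ∀ g : G, ∃ a ∈ P, ∃ b ∈ P, g = a * b⁻¹)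
    (hθi : ∀ a ∈ P, Function.Injective (θ a))
    (hθm : ∀ a ∈ P, ∀ b ∈ P, ∀ x : X, θ a (θ b x) = θ (b * a) x)
    {a b a' b' : G} (ha : a ∈ P) (hb : b ∈ P) (ha' : a' ∈ P) (hb' : b' ∈ P)
    (hab : a * b⁻¹ = a' * b'⁻¹) {x y : X} (hxy : θ a x = θ b y) :
    θ a' x = θ b' y := by
  obtain ⟨s, hs, t, ht, hst⟩ := hPG (a'⁻¹ * a)
  have hs' : s = a'⁻¹ * a * t := by rw [hst]; group
  have key : a'⁻¹ * a = b'⁻¹ * b := by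
    calc a'⁻¹ * a = a'⁻¹ * (a * b⁻¹) * b := by group
      _ = a'⁻¹ * (a' * b'⁻¹) * b := by rw [hab]
      _ = b'⁻¹ * b := by group
  have h1 : a' * s = a * t := by rw [hs']; group
  have h2 : b' * s = b * t := by
    calc b' * s = b' * (a'⁻¹ * a) * t := by rw [hs']; group
      _ = b' * (b'⁻¹ * b) * t := by rw [key]
      _ = b * t := by group
  have E : θ s (θ a' x) = θ s (θ b' y) := by
    rw [hθm s hs a' ha', hθm s hs b' hb', h1, h2, ← hθm t ht a ha, ← hθm t ht b hb, hxy]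
  exact hθi s hs E

/-- Characterization of the relation using any single valid pair of witnesses. -/
lemma XGrel_iff {G : Type*} [Group G] {X : Type*} (P : Set G) (θ : G → X → X)
    (hPG : ∀ g : G, ∃ a ∈ P, ∃ b ∈ P, g = a * b⁻¹)
    (hθi : ∀ a ∈ P, Function.Injective (θ a))
    (hθm : ∀ a ∈ P, ∀ b ∈ P, ∀ x : X, θ a (θ b x) = θ (b * a) x)
    {x y : X} {g h a b : G} (ha : a ∈ P) (hb : b ∈ P) (hab : g * h⁻¹ = a * b⁻¹) :
    XGrel P θ (x, g) (y, h) ↔ θ a x = θ b y := by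
  constructor
  · rintro ⟨a', ha', b', hb', hab', hxy⟩
    exact pair_indep P θ hPG hθi hθm ha' hb' ha hb (hab'.symm.trans hab) hxy
  · intro hxy
    exact ⟨a, ha, b, hb, hab, hxy⟩

/-- The relation `XGrel` is an equivalence relation. -/
lemma XGrel_equiv {G : Type*} [Group G] {X : Type*} (P : Set G) (θ : G → X → X)
    (hP1 : (1 : G) ∈ P) (hPmul : ∀ a ∈ P, ∀ b ∈ P, a * b ∈ P)
    (hPG : ∀ g : G, ∃ a ∈ P, ∃ b ∈ P, g = a * b⁻¹)
    (hθm : ∀ a ∈ P, ∀ b ∈ P, ∀ x : X, θ a (θ b x) = θ (b * a) x) :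
    Equivalence (XGrel P θ) := by
  constructor
  · intro p
    exact ⟨1, hP1, 1, hP1, by group, rfl⟩
  · rintro p q ⟨a, ha, b, hb, hab, hxy⟩
    exact ⟨b, hb, a, ha, by simpa [mul_inv_rev] using congrArg Inv.inv hab, hxy.symm⟩
  · rintro p q r ⟨a, ha, b, hb, hab, hxy⟩ ⟨c, hc, d, hd, hcd, hyz⟩
    obtain ⟨s, hs, t, ht, hst⟩ := hPG (b⁻¹ * c)
    have hbc : c * t = b * s := by
      calc c * t = b * (b⁻¹ * c) * t := by group
        _ = b * (s * t⁻¹) * t := by rw [hst]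
        _ = b * s := by group
    refine ⟨a * s, hPmul a ha s hs, d * t, hPmul d hd t ht, ?_, ?_⟩
    · calc p.2 * r.2⁻¹ = (p.2 * q.2⁻¹) * (q.2 * r.2⁻¹) := by group
        _ = (a * b⁻¹) * (c * d⁻¹) := by rw [hab, hcd]
        _ = a * (b⁻¹ * c) * d⁻¹ := by group
        _ = a * (s * t⁻¹) * d⁻¹ := by rw [hst]
        _ = (a * s) * (d * t)⁻¹ := by group
    · calc θ (a * s) p.1 = θ s (θ a p.1) := (hθm s hs a ha p.1).symm
        _ = θ s (θ b q.1) := by rw [hxy]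
        _ = θ (b * s) q.1 := hθm s hs b hb q.1
        _ = θ (c * t) q.1 := by rw [hbc]
        _ = θ t (θ c q.1) := (hθm t ht c hc q.1).symm
        _ = θ t (θ d r.1) := by rw [hyz]
        _ = θ (d * t) r.1 := hθm t ht d hd r.1

/-- A union of slices with closed fibers is closed in `X × G` with `G` discrete. -/
lemma sliced_isClosed [TopologicalSpace G] [DiscreteTopology G]
    {S : G → Set X} (hS : ∀ h, IsClosed (S h)) :
    IsClosed (⋃ h, S h ×ˢ ({h} : Set G)) := by
  rw [← isOpen_compl_iff]
  have hc : (⋃ h, S h ×ˢ ({h} : Set G))ᶜ = ⋃ h, (S h)ᶜ ×ˢ ({h} : Set G) := by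
    ext ⟨y, h⟩
    simp only [Set.mem_compl_iff, Set.mem_iUnion, Set.mem_prod, Set.mem_singleton_iff,
      not_exists, not_and]
    constructor
    · intro hm
      exact ⟨h, fun hy => hm h hy rfl, rfl⟩
    · rintro ⟨i, hyi, rfl⟩ j hyj hij
      exact hyi (hij ▸ hyj)
  rw [hc]
  exact isOpen_iUnion fun h => ((hS h).isOpen_compl).prod (isOpen_discrete _)

end Aux

/-- `∼` is an equivalence relation on `X × G`; the quotient `X̃` is locally
compact Hausdorff; the quotient map is continuous, surjective and open; the set
`X' = {[x, e] : x ∈ X}` is clopen in `X̃`, `x ↦ [x, e]` is injective, and `X'` is full for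
the action `θ̃_h [x, g] = [x, gh]` (every `θ̃`-orbit meets `X'`). -/
theorem stmt_5 {G : Type*} [Group G] [Countable G]
    [TopologicalSpace G] [DiscreteTopology G]
    {X : Type*} [TopologicalSpace X] [CompactSpace X] [T2Space X]
    [SecondCountableTopology X]
    (P : Set G) (hP1 : (1 : G) ∈ P) (hPmul : ∀ a ∈ P, ∀ b ∈ P, a * b ∈ P)
    (hPG : ∀ g : G, ∃ a ∈ P, ∃ b ∈ P, g = a * b⁻¹)
    (θ : G → X → X)
    (hθc : ∀ a ∈ P, Continuous (θ a))
    (hθi : ∀ a ∈ P, Function.Injective (θ a))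
    (hθ1 : θ 1 = id)
    (hθm : ∀ a ∈ P, ∀ b ∈ P, ∀ x : X, θ a (θ b x) = θ (b * a) x)
    (hopen : ∀ a ∈ P, IsOpen (Set.range (θ a))) :
    Equivalence (XGrel P θ) ∧
    LocallyCompactSpace (Quot (XGrel P θ)) ∧
    T2Space (Quot (XGrel P θ)) ∧
    Continuous (Quot.mk (XGrel P θ)) ∧
    Function.Surjective (Quot.mk (XGrel P θ)) ∧
    IsOpenMap (Quot.mk (XGrel P θ)) ∧
    IsClopen (Set.range fun x : X => Quot.mk (XGrel P θ) (x, 1)) ∧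
    Function.Injective (fun x : X => Quot.mk (XGrel P θ) (x, 1)) ∧
    (∀ (x : X) (g : G), ∃ h : G,
      Quot.mk (XGrel P θ) (x, g * h) ∈ Set.range fun x : X => Quot.mk (XGrel P θ) (x, 1)) := by
  have hEq : Equivalence (XGrel P θ) := XGrel_equiv P θ hP1 hPmul hPG hθm
  have mk_eq : ∀ u v : X × G,
      Quot.mk (XGrel P θ) u = Quot.mk (XGrel P θ) v ↔ XGrel P θ u v :=
    fun u v => ⟨fun h => hEq.eqvGen_iff.mp (Quot.eqvGen_exact h), Quot.sound⟩
  -- the quotient map is open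
  have hOpenMap : IsOpenMap (Quot.mk (XGrel P θ)) := by
    intro U hU
    rw [← isQuotientMap_quot_mk.isOpen_preimage]
    rw [isOpen_iff_forall_mem_open]
    rintro ⟨y, h⟩ hv
    obtain ⟨⟨x, g⟩, hu, heq⟩ := hv
    obtain ⟨a, ha, b, hb, hab, hxy⟩ := (mk_eq _ _).mp heq
    rw [isOpen_prod_iff] at hU
    obtain ⟨W, T, hW, hT, hxW, hgT, hWT⟩ := hU x g hu
    refine ⟨(θ b ⁻¹' (θ a '' W)) ×ˢ ({h} : Set G), ?_, ?_, ?_⟩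
    · rintro ⟨y', h'⟩ ⟨hy', hh'⟩
      obtain ⟨x', hx', hxe⟩ := hy'
      have hh : h' = h := hh'
      subst hh
      exact Set.mem_preimage.mpr
        ⟨(x', g), hWT ⟨hx', hgT⟩, (mk_eq _ _).mpr ⟨a, ha, b, hb, hab, hxe⟩⟩
    · exact (((theta_isOpenMap P θ hθc hθi hopen ha) W hW).preimage (hθc b hb)).prod
        (isOpen_discrete _)
    · refine ⟨?_, rfl⟩
      show θ b y ∈ θ a '' W
      rw [← hxy]
      exact ⟨x, hxW, rfl⟩
  -- Hausdorff
  have hT2 : T2Space (Quot (XGrel P θ)) := by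
    constructor
    intro p q hpq
    obtain ⟨⟨x, g⟩, rfl⟩ := Quot.exists_rep p
    obtain ⟨⟨y, h⟩, rfl⟩ := Quot.exists_rep q
    obtain ⟨a, ha, b, hb, hab⟩ := hPG (g * h⁻¹)
    have hne : θ a x ≠ θ b y := fun he => hpq ((mk_eq _ _).mpr ⟨a, ha, b, hb, hab, he⟩)
    obtain ⟨W1, W2, hW1, hW2, hm1, hm2, hdisj⟩ := t2_separation hne
    refine ⟨Quot.mk _ '' ((θ a ⁻¹' W1) ×ˢ ({g} : Set G)),
      Quot.mk _ '' ((θ b ⁻¹' W2) ×ˢ ({h} : Set G)),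
      hOpenMap _ ((hW1.preimage (hθc a ha)).prod (isOpen_discrete _)),
      hOpenMap _ ((hW2.preimage (hθc b hb)).prod (isOpen_discrete _)),
      ⟨(x, g), ⟨hm1, rfl⟩, rfl⟩, ⟨(y, h), ⟨hm2, rfl⟩, rfl⟩, ?_⟩
    rw [Set.disjoint_left]
    rintro z ⟨⟨x', g'⟩, ⟨hx', hg'⟩, rfl⟩ ⟨⟨y', h'⟩, ⟨hy', hh'⟩, hzeq⟩
    have hg : g' = g := hg'
    have hh : h' = h := hh'
    have hrel : XGrel P θ (x', g) (y', h) := by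
      rw [← hg, ← hh]; exact (mk_eq _ _).mp hzeq.symm
    have heq2 : θ a x' = θ b y' := (XGrel_iff P θ hPG hθi hθm ha hb hab).mp hrel
    exact Set.disjoint_left.mp hdisj hx' (by rw [heq2]; exact hy')
  -- injectivity of x ↦ [x, 1]
  have hinj : Function.Injective (fun x : X => Quot.mk (XGrel P θ) (x, 1)) := by
    intro x y hxy
    obtain ⟨a, ha, b, hb, hab, he⟩ := (mk_eq _ _).mp hxy
    have hab' : a = b := by
      have h1 : a * b⁻¹ = 1 := by rw [← hab]; group
      exact mul_inv_eq_one.mp h1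
    subst hab'
    exact hθi a ha he
  -- clopen-ness of X'
  have hclopen : IsClopen (Set.range fun x : X => Quot.mk (XGrel P θ) (x, 1)) := by
    choose A hA B hB hAB using fun h : G => hPG h⁻¹
    have hpre : Quot.mk (XGrel P θ) ⁻¹' (Set.range fun x : X => Quot.mk (XGrel P θ) (x, 1)) =
        ⋃ h : G, (θ (B h) ⁻¹' Set.range (θ (A h))) ×ˢ ({h} : Set G) := by
      ext ⟨y, h⟩
      constructor
      · rintro ⟨x, hx⟩
        have hrel : XGrel P θ (x, 1) (y, h) := (mk_eq _ _).mp hx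
        have h1 : (1 : G) * h⁻¹ = A h * (B h)⁻¹ := by rw [one_mul]; exact hAB h
        have := (XGrel_iff P θ hPG hθi hθm (hA h) (hB h) h1).mp hrel
        exact Set.mem_iUnion.mpr ⟨h, ⟨⟨x, this⟩, rfl⟩⟩
      · intro hy
        obtain ⟨i, ⟨⟨x, hx⟩, hi⟩⟩ := Set.mem_iUnion.mp hy
        have hhi : h = i := hi
        subst hhi
        have h1 : (1 : G) * h⁻¹ = A h * (B h)⁻¹ := by rw [one_mul]; exact hAB h
        exact ⟨x, (mk_eq _ _).mpr ⟨A h, hA h, B h, hB h, h1, hx⟩⟩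
    constructor
    · rw [← isQuotientMap_quot_mk.isClosed_preimage, hpre]
      exact sliced_isClosed fun h =>
        (isCompact_range (hθc (A h) (hA h))).isClosed.preimage (hθc (B h) (hB h))
    · rw [← isQuotientMap_quot_mk.isOpen_preimage, hpre]
      exact isOpen_iUnion fun h =>
        ((hopen (A h) (hA h)).preimage (hθc (B h) (hB h))).prod (isOpen_discrete _)
  -- local compactness
  haveI := hT2
  haveI : WeaklyLocallyCompactSpace (Quot (XGrel P θ)) := by
    constructor
    intro p
    obtain ⟨⟨x, g⟩, rfl⟩ := Quot.exists_rep p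
    refine ⟨Quot.mk _ '' (Set.univ ×ˢ ({g} : Set G)),
      ((isCompact_univ.prod isCompact_singleton).image continuous_quot_mk), ?_⟩
    exact (hOpenMap _ (isOpen_univ.prod (isOpen_discrete _))).mem_nhds
      ⟨(x, g), ⟨trivial, rfl⟩, rfl⟩
  refine ⟨hEq, inferInstance, hT2, continuous_quot_mk, fun q => Quot.exists_rep q,
    hOpenMap, hclopen, hinj, fun x g => ⟨g⁻¹, x, ?_⟩⟩
  have : g * g⁻¹ = (1 : G) := mul_inv_cancel g
  rw [this]
end

section
/- The map Φ : X ⋊ P → X̃ × G, Φ(x, g) = ([x, e], g), is a homeomorphism from X ⋊ P onto the reduction (X̃ ⋊ G)|_{X'} = {(z, g) ∈ X̃ × G : z ∈ X' and θ̃_g(z) ∈ X'} (with the subspace topology from X̃ × G, G discrete); moreover θ̃_g([x, e]) = [u(x, g), e] for every (x, g) ∈ X ⋊ P, so Φ is an isomorphism of groupoids intertwining range and source maps and multiplication. -/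
open Topology


/-- `X' = {[x, e] : x ∈ X} ⊆ X̃`. -/
def Xprime {G X : Type*} [Group G] (P : Set G) (θ : G → X → X) :
    Set (Quot (XGrel P θ)) :=
  Set.range fun x : X => Quot.mk (XGrel P θ) (x, 1)

/-- The reduction `(X̃ ⋊ G)|_{X'} = {(z, g) : z ∈ X' and θ̃_g(z) ∈ X'}`, where
`θ̃_g([x, k]) = [x, k * g]`. -/
def Reduction {G X : Type*} [Group G] (P : Set G) (θ : G → X → X) :
    Set (Quot (XGrel P θ) × G) :=
  {p | p.1 ∈ Xprime P θ ∧ ∀ (x : X) (k : G),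
    p.1 = Quot.mk (XGrel P θ) (x, k) → Quot.mk (XGrel P θ) (x, k * p.2) ∈ Xprime P θ}

section Aux

variable {G X : Type*} [Group G] {P : Set G} {θ : G → X → X}

lemma aux_equivalence (hP1 : (1 : G) ∈ P) (hPmul : ∀ a ∈ P, ∀ b ∈ P, a * b ∈ P)
    (hPG : ∀ g : G, ∃ a ∈ P, ∃ b ∈ P, g = a * b⁻¹)
    (hθm : ∀ a ∈ P, ∀ b ∈ P, ∀ x : X, θ a (θ b x) = θ (b * a) x) :
    Equivalence (XGrel P θ) := by
  constructor
  · intro p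
    exact ⟨1, hP1, 1, hP1, by group, rfl⟩
  · rintro p q ⟨a, ha, b, hb, hg, hx⟩
    refine ⟨b, hb, a, ha, ?_, hx.symm⟩
    have : (p.2 * q.2⁻¹)⁻¹ = (a * b⁻¹)⁻¹ := by rw [hg]
    calc q.2 * p.2⁻¹ = (p.2 * q.2⁻¹)⁻¹ := by group
      _ = (a * b⁻¹)⁻¹ := this
      _ = b * a⁻¹ := by group
  · rintro p q r ⟨a, ha, b, hb, h1, e1⟩ ⟨c, hc, d, hd, h2, e2⟩
    obtain ⟨p', hp', q', hq', h3⟩ := hPG (b⁻¹ * c)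
    have hbp : b * p' = c * q' := by
      have hc' : c = b * (p' * q'⁻¹) := by rw [← h3]; group
      rw [hc']; group
    refine ⟨a * p', hPmul a ha p' hp', d * q', hPmul d hd q' hq', ?_, ?_⟩
    · calc p.2 * r.2⁻¹ = (p.2 * q.2⁻¹) * (q.2 * r.2⁻¹) := by group
        _ = (a * b⁻¹) * (c * d⁻¹) := by rw [h1, h2]
        _ = a * (b⁻¹ * c) * d⁻¹ := by group
        _ = a * (p' * q'⁻¹) * d⁻¹ := by rw [h3]
        _ = (a * p') * (d * q')⁻¹ := by group
    · calc θ (a * p') p.1 = θ p' (θ a p.1) := (hθm p' hp' a ha p.1).symm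
        _ = θ p' (θ b q.1) := by rw [e1]
        _ = θ (b * p') q.1 := hθm p' hp' b hb q.1
        _ = θ (c * q') q.1 := by rw [hbp]
        _ = θ q' (θ c q.1) := (hθm q' hq' c hc q.1).symm
        _ = θ q' (θ d r.1) := by rw [e2]
        _ = θ (d * q') r.1 := hθm q' hq' d hd r.1

lemma aux_mk_eq_iff (hP1 : (1 : G) ∈ P) (hPmul : ∀ a ∈ P, ∀ b ∈ P, a * b ∈ P)
    (hPG : ∀ g : G, ∃ a ∈ P, ∃ b ∈ P, g = a * b⁻¹)
    (hθm : ∀ a ∈ P, ∀ b ∈ P, ∀ x : X, θ a (θ b x) = θ (b * a) x)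
    (p q : X × G) :
    Quot.mk (XGrel P θ) p = Quot.mk (XGrel P θ) q ↔ XGrel P θ p q :=
  ⟨fun h => (aux_equivalence hP1 hPmul hPG hθm).eqvGen_iff.mp (Quot.eqvGen_exact h),
   Quot.sound⟩

end Aux

/-- `θ̃_g([x, e]) = [u(x, g), e]` for `(x, g) ∈ X ⋊ P`, the map
`Φ(x, g) = ([x, e], g)` takes values in the reduction `(X̃ ⋊ G)|_{X'}`, and it is a
homeomorphism of `X ⋊ P` onto that reduction (hence an isomorphism of groupoids,
intertwining range, source and multiplication). -/
theorem stmt_6 {G : Type*} [Group G] [Countable G]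
    [TopologicalSpace G] [DiscreteTopology G]
    {X : Type*} [TopologicalSpace X] [CompactSpace X] [T2Space X]
    [SecondCountableTopology X]
    (P : Set G) (hP1 : (1 : G) ∈ P) (hPmul : ∀ a ∈ P, ∀ b ∈ P, a * b ∈ P)
    (hPG : ∀ g : G, ∃ a ∈ P, ∃ b ∈ P, g = a * b⁻¹)
    (θ : G → X → X)
    (hθc : ∀ a ∈ P, Continuous (θ a))
    (hθi : ∀ a ∈ P, Function.Injective (θ a))
    (hθ1 : θ 1 = id)
    (hθm : ∀ a ∈ P, ∀ b ∈ P, ∀ x : X, θ a (θ b x) = θ (b * a) x)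
    (hopen : ∀ a ∈ P, IsOpen (Set.range (θ a)))
    (u : X → G → X)
    (hu : ∀ x : X, ∀ g ∈ Qset P θ x, ∀ a ∈ P, ∀ b ∈ P,
      g = a * b⁻¹ → θ a x = θ b (u x g)) :
    (∀ x : X, ∀ g ∈ Qset P θ x,
      Quot.mk (XGrel P θ) (x, g) = Quot.mk (XGrel P θ) (u x g, 1)) ∧
    (∀ p : {q : X × G // q.2 ∈ Qset P θ q.1},
      ((Quot.mk (XGrel P θ) (p.1.1, 1), p.1.2) : Quot (XGrel P θ) × G) ∈ Reduction P θ) ∧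
    (∃ Φ : {q : X × G // q.2 ∈ Qset P θ q.1} ≃ₜ Reduction P θ,
      ∀ p : {q : X × G // q.2 ∈ Qset P θ q.1},
        (Φ p : Quot (XGrel P θ) × G) = (Quot.mk (XGrel P θ) (p.1.1, 1), p.1.2)) := by
  have mk_eq_iff := aux_mk_eq_iff (P := P) (θ := θ) hP1 hPmul hPG hθm
  set ι : X → Quot (XGrel P θ) := fun x => Quot.mk (XGrel P θ) (x, 1) with hι_def
  -- Part 1
  have part1 : ∀ x : X, ∀ g ∈ Qset P θ x,
      Quot.mk (XGrel P θ) (x, g) = Quot.mk (XGrel P θ) (u x g, 1) := by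
    intro x g hg
    obtain ⟨a, ha, b, hb, y, hgab, _⟩ := hg
    exact Quot.sound ⟨a, ha, b, hb, by simpa using hgab, hu x g ⟨a, ha, b, hb, y, hgab, ‹_›⟩ a ha b hb hgab⟩
  -- Part 2 (membership in the reduction)
  have part2 : ∀ (x : X) (g : G), g ∈ Qset P θ x →
      ((ι x, g) : Quot (XGrel P θ) × G) ∈ Reduction P θ := by
    intro x g hg
    obtain ⟨c, hc, d, hd, y, hgcd, e2⟩ := hg
    refine ⟨⟨x, rfl⟩, ?_⟩
    intro x' k hk
    obtain ⟨a, ha, b, hb, h1, e1⟩ := (mk_eq_iff (x, 1) (x', k)).mp hk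
    have h1' : k⁻¹ = a * b⁻¹ := by simpa using h1
    have hk' : k = b * a⁻¹ := by
      calc k = (k⁻¹)⁻¹ := (inv_inv k).symm
        _ = (a * b⁻¹)⁻¹ := by rw [h1']
        _ = b * a⁻¹ := by group
    obtain ⟨p', hp', q', hq', h3⟩ := hPG (a⁻¹ * c)
    have hac : a * p' = c * q' := by
      have hc' : c = a * (p' * q'⁻¹) := by rw [← h3]; group
      rw [hc']; group
    refine ⟨y, ?_⟩
    refine (Quot.sound ?_).symm
    refine ⟨b * p', hPmul b hb p' hp', d * q', hPmul d hd q' hq', ?_, ?_⟩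
    · calc k * g * (1 : G)⁻¹ = k * g := by group
        _ = (b * a⁻¹) * (c * d⁻¹) := by rw [hk', hgcd]
        _ = b * (a⁻¹ * c) * d⁻¹ := by group
        _ = b * (p' * q'⁻¹) * d⁻¹ := by rw [h3]
        _ = (b * p') * (d * q')⁻¹ := by group
    · calc θ (b * p') x' = θ p' (θ b x') := (hθm p' hp' b hb x').symm
        _ = θ p' (θ a x) := by rw [← e1]
        _ = θ (a * p') x := hθm p' hp' a ha x
        _ = θ (c * q') x := by rw [hac]
        _ = θ q' (θ c x) := (hθm q' hq' c hc x).symm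
        _ = θ q' (θ d y) := by rw [e2]
        _ = θ (d * q') y := hθm q' hq' d hd y
  -- ι is a continuous injective open map
  have hι_cont : Continuous ι :=
    continuous_quot_mk.comp (continuous_id.prodMk continuous_const)
  have hι_inj : Function.Injective ι := by
    intro x y h
    obtain ⟨a, ha, b, hb, h1, e1⟩ := (mk_eq_iff (x, 1) (y, 1)).mp h
    have hab : a = b := by
      have : a * b⁻¹ = 1 := by simpa using h1.symm
      exact mul_inv_eq_one.mp this
    subst hab
    exact hθi a ha e1
  -- images of open sets under θ b are open
  have himg : ∀ b ∈ P, ∀ U : Set X, IsOpen U → IsOpen (θ b '' U) := by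
    intro b hb U hU
    have hemb : IsOpenEmbedding (θ b) :=
      ⟨((hθc b hb).isClosedEmbedding (hθi b hb)).isEmbedding, hopen b hb⟩
    exact hemb.isOpenMap U hU
  -- ι is an open map
  have hι_open : IsOpenMap ι := by
    intro U hU
    rw [← isQuotientMap_quot_mk.isOpen_preimage]
    have hset : Quot.mk (XGrel P θ) ⁻¹' (ι '' U) =
        ⋃ a ∈ P, ⋃ b ∈ P, (θ a ⁻¹' (θ b '' U)) ×ˢ ({a * b⁻¹} : Set G) := by
      ext ⟨y, h⟩
      simp only [Set.mem_preimage, Set.mem_image, Set.mem_iUnion, Set.mem_prod,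
        Set.mem_singleton_iff]
      constructor
      · rintro ⟨x, hxU, hx⟩
        obtain ⟨a, ha, b, hb, h1, e1⟩ := (mk_eq_iff (y, h) (x, 1)).mp hx.symm
        exact ⟨a, ha, b, hb, ⟨x, hxU, e1.symm⟩, by simpa using h1⟩
      · rintro ⟨a, ha, b, hb, ⟨x, hxU, e1⟩, h1⟩
        exact ⟨x, hxU, (Quot.sound ⟨a, ha, b, hb, by simpa using h1, e1.symm⟩).symm⟩
    rw [hset]
    exact isOpen_biUnion fun a ha => isOpen_biUnion fun b hb =>
      ((himg b hb U hU).preimage (hθc a ha)).prod (isOpen_discrete _)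
  have hι_emb : IsOpenEmbedding ι :=
    IsOpenEmbedding.of_continuous_injective_isOpenMap hι_cont hι_inj hι_open
  -- the homeomorphism X ≃ₜ range ι
  let hh : X ≃ₜ Set.range ι := hι_emb.isEmbedding.toHomeomorph
  have hh_apply : ∀ x : X, (hh x : Quot (XGrel P θ)) = ι x := fun x => by
    simp [hh]
  have hh_symm_apply : ∀ w : Set.range ι, ι (hh.symm w) = w := fun w => by
    have := hh.apply_symm_apply w
    rw [← hh_apply (hh.symm w), this]
  have hh_symm_iota : ∀ x : X, hh.symm ⟨ι x, ⟨x, rfl⟩⟩ = x := fun x => by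
    have : (⟨ι x, ⟨x, rfl⟩⟩ : Set.range ι) = hh x := Subtype.ext (hh_apply x).symm
    rw [this, hh.symm_apply_apply]
  -- membership of Xprime gives range ι (definitional)
  have hXprime : ∀ z : Quot (XGrel P θ), z ∈ Xprime P θ → z ∈ Set.range ι := fun z hz => hz
  -- g ∈ Qset for points of the reduction
  have hQmem : ∀ q : Reduction P θ, (q : Quot (XGrel P θ) × G).2 ∈
      Qset P θ (hh.symm ⟨(q : Quot (XGrel P θ) × G).1, hXprime _ q.2.1⟩) := by
    rintro ⟨⟨z, g⟩, hz, hred⟩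
    set x := hh.symm ⟨z, hXprime z hz⟩ with hx_def
    have hzx : ι x = z := hh_symm_apply ⟨z, hXprime z hz⟩
    have h1 : Quot.mk (XGrel P θ) (x, 1 * g) ∈ Xprime P θ := hred x 1 hzx.symm
    rw [one_mul] at h1
    obtain ⟨y, hy⟩ := h1
    obtain ⟨a, ha, b, hb, h1', e1⟩ := (mk_eq_iff (x, g) (y, 1)).mp hy.symm
    exact ⟨a, ha, b, hb, y, by simpa using h1', e1⟩
  -- the forward map
  let F : {q : X × G // q.2 ∈ Qset P θ q.1} → Reduction P θ :=
    fun p => ⟨(ι p.1.1, p.1.2), part2 p.1.1 p.1.2 p.2⟩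
  let Finv : Reduction P θ → {q : X × G // q.2 ∈ Qset P θ q.1} :=
    fun q => ⟨(hh.symm ⟨(q : Quot (XGrel P θ) × G).1, hXprime _ q.2.1⟩,
      (q : Quot (XGrel P θ) × G).2), hQmem q⟩
  have hleft : Function.LeftInverse Finv F := by
    rintro ⟨⟨x, g⟩, hq⟩
    apply Subtype.ext
    apply Prod.ext
    · exact hh_symm_iota x
    · rfl
  have hright : Function.RightInverse Finv F := by
    rintro ⟨⟨z, g⟩, hz⟩
    apply Subtype.ext
    apply Prod.ext
    · exact hh_symm_apply ⟨z, hXprime z hz.1⟩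
    · rfl
  refine ⟨part1, fun p => part2 p.1.1 p.1.2 p.2, ?_⟩
  refine ⟨⟨⟨F, Finv, hleft, hright⟩, ?_, ?_⟩, fun p => rfl⟩
  · exact Continuous.subtype_mk
      (((hι_cont.comp (continuous_fst.comp continuous_subtype_val)).prodMk
        (continuous_snd.comp continuous_subtype_val))) _
  · exact Continuous.subtype_mk
      ((hh.symm.continuous.comp
        (Continuous.subtype_mk (continuous_fst.comp continuous_subtype_val) _)).prodMk
        (continuous_snd.comp continuous_subtype_val)) _
end

section
/- Assume each θ_m (m ∈ P) is a homeomorphism of X, and let θ̂ be the right G-action on X determined by θ̂_{mn⁻¹} = θ_n⁻¹ ∘ θ_m for m, n ∈ P. Then the map φ : X → X̃, φ(x) = [x, e], is a homeomorphism of X onto X̃ satisfying φ(θ̂_g(x)) = θ̃_g(φ(x)) for all x ∈ X and g ∈ G; that is, the actions G ↷_θ̂ X and G ↷_θ̃ X̃ are conjugate. -/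
/-- if every `θ_m` (`m ∈ P`) is a homeomorphism of `X`, and `θ̂` is the right
`G`-action on `X` determined by `θ̂_{mn⁻¹} = θ_n⁻¹ ∘ θ_m`, then `φ(x) = [x, e]` is a
homeomorphism `X ≃ₜ X̃` intertwining `θ̂` with `θ̃` (where `θ̃_g [x, k] = [x, k * g]`,
so `φ(θ̂_g(x)) = θ̃_g(φ(x)) = [x, g]`): the actions `G ↷ X` and `G ↷ X̃` are conjugate. -/
theorem stmt_8 {G : Type*} [Group G] [Countable G]
    [TopologicalSpace G] [DiscreteTopology G]
    {X : Type*} [TopologicalSpace X] [CompactSpace X] [T2Space X]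
    [SecondCountableTopology X]
    (P : Set G) (hP1 : (1 : G) ∈ P) (hPmul : ∀ a ∈ P, ∀ b ∈ P, a * b ∈ P)
    (hPG : ∀ g : G, ∃ a ∈ P, ∃ b ∈ P, g = a * b⁻¹)
    (θ : G → X → X)
    (hθc : ∀ a ∈ P, Continuous (θ a))
    (hθi : ∀ a ∈ P, Function.Injective (θ a))
    (hθ1 : θ 1 = id)
    (hθm : ∀ a ∈ P, ∀ b ∈ P, ∀ x : X, θ a (θ b x) = θ (b * a) x)
    (hθsurj : ∀ m ∈ P, Function.Surjective (θ m))
    (θhat : G → X → X)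
    (hθhat : ∀ g : G, ∀ m ∈ P, ∀ n ∈ P, g = m * n⁻¹ → ∀ x : X, θ n (θhat g x) = θ m x) :
    ∃ φ : X ≃ₜ Quot (XGrel P θ),
      (∀ x : X, φ x = Quot.mk (XGrel P θ) (x, 1)) ∧
      (∀ (x : X) (g : G), φ (θhat g x) = Quot.mk (XGrel P θ) (x, g)) := by

  -- θhat 1 = id
  have hhat1 : ∀ x : X, θhat 1 x = x := by
    intro x
    have h := hθhat 1 1 hP1 1 hP1 (by group) x
    simpa [hθ1] using h
  -- continuity of each θhat g
  have hhatc : ∀ g : G, Continuous (θhat g) := by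
    intro g
    obtain ⟨m, hm, n, hn, hg⟩ := hPG g
    have hbij : Function.Bijective (θ n) := ⟨hθi n hn, hθsurj n hn⟩
    let e : X ≃ X := Equiv.ofBijective _ hbij
    have he : Continuous e := hθc n hn
    let h : X ≃ₜ X := Continuous.homeoOfEquivCompactToT2 he
    have heq : θhat g = h.symm ∘ θ m := by
      funext x
      apply hθi n hn
      have h1 := hθhat g m hm n hn hg x
      have h2 : θ n (h.symm (θ m x)) = θ m x := h.apply_symm_apply (θ m x)
      simp [h1, h2]
    rw [heq]
    exact h.symm.continuous.comp (hθc m hm)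
  -- key: the lift is well defined
  have key : ∀ p q : X × G, XGrel P θ p q → θhat p.2 p.1 = θhat q.2 q.1 := by
    rintro ⟨x, g⟩ ⟨y, h⟩ ⟨a, ha, b, hb, heq, hxy⟩
    simp only at heq hxy ⊢
    obtain ⟨p, hp, q, hq, hh⟩ := hPG h
    obtain ⟨u, hu, v, hv, huv⟩ := hPG (b⁻¹ * p)
    have hg2 : g = (a * u) * (q * v)⁻¹ := by
      have h1 : g = a * b⁻¹ * h := by rw [← heq]; group
      have h2 : a * b⁻¹ * (p * q⁻¹) = a * (b⁻¹ * p) * q⁻¹ := by group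
      rw [h1, hh, h2, huv]; group
    have hbu : b * u = p * v := by
      have : p = b * (u * v⁻¹) := by rw [← huv]; group
      rw [this]; group
    have hmem1 : a * u ∈ P := hPmul a ha u hu
    have hmem2 : q * v ∈ P := hPmul q hq v hv
    apply hθi (q * v) hmem2
    have e1 : θ (q * v) (θhat g x) = θ (a * u) x := hθhat g (a * u) hmem1 (q * v) hmem2 hg2 x
    have e2 : θ q (θhat h y) = θ p y := hθhat h p hp q hq hh y
    calc θ (q * v) (θhat g x) = θ (a * u) x := e1
      _ = θ u (θ a x) := (hθm u hu a ha x).symm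
      _ = θ u (θ b y) := by rw [hxy]
      _ = θ (b * u) y := hθm u hu b hb y
      _ = θ (p * v) y := by rw [hbu]
      _ = θ v (θ p y) := (hθm v hv p hp y).symm
      _ = θ v (θ q (θhat h y)) := by rw [e2]
      _ = θ (q * v) (θhat h y) := by
          rw [hθm v hv q hq (θhat h y)]
  -- the relation [θhat g x, 1] = [x, g]
  have rel1 : ∀ (x : X) (g : G), XGrel P θ (θhat g x, 1) (x, g) := by
    intro x g
    obtain ⟨m, hm, n, hn, hg⟩ := hPG g
    refine ⟨n, hn, m, hm, ?_, hθhat g m hm n hn hg x⟩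
    simp only
    rw [hg]; group
  -- build the homeomorphism
  let ψ : Quot (XGrel P θ) → X := Quot.lift (fun p => θhat p.2 p.1) key
  have hψc : Continuous ψ := by
    apply continuous_quot_lift key
    rw [continuous_iff_continuousAt]
    rintro ⟨x, g⟩
    have h1 : ContinuousAt (fun p : X × G => θhat g p.1) (x, g) :=
      ((hhatc g).comp continuous_fst).continuousAt
    apply h1.congr
    have hmem : {p : X × G | p.2 = g} ∈ nhds (x, g) := by
      apply IsOpen.mem_nhds
      · exact (isOpen_discrete ({g} : Set G)).preimage continuous_snd
      · rfl
    filter_upwards [hmem] with p hp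
    exact congrArg (fun k => θhat k p.1) hp.symm
  refine ⟨⟨⟨fun x => Quot.mk _ (x, 1), ψ, ?_, ?_⟩, ?_, hψc⟩, ?_, ?_⟩
  · intro x
    exact hhat1 x
  · intro z
    induction z using Quot.ind with
    | _ p =>
      obtain ⟨x, g⟩ := p
      exact Quot.sound (rel1 x g)
  · exact continuous_quot_mk.comp (continuous_id.prodMk continuous_const)
  · intro x; rfl
  · intro x g
    show Quot.mk (XGrel P θ) (θhat g x, 1) = Quot.mk (XGrel P θ) (x, g)
    exact Quot.sound (rel1 x g)
end

section
/- Suppose the actions θ and ρ are conjugate via a homeomorphism φ : X → Y and a semigroup isomorphism α : P → S. Then: (a) the map β : G → H given by β(ab⁻¹) = α(a)α(b)⁻¹ for a, b ∈ P is a well-defined group isomorphism (i.e., if ab⁻¹ = cd⁻¹ with a, b, c, d ∈ P then α(a)α(b)⁻¹ = α(c)α(d)⁻¹, and β is a bijective group homomorphism); (b) for every (x, g) ∈ X ⋊ P one has β(g) ∈ Q_{φ(x)} and φ(u(x, g)) = u(φ(x), β(g)), and for every (y, h) ∈ Y ⋊ S one has β⁻¹(h) ∈ Q_{φ⁻¹(y)}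 and φ⁻¹(u(y, h)) = u(φ⁻¹(y), β⁻¹(h)). Consequently θ and ρ are continuously orbit equivalent, with a(x, g) = β(g) and b(y, h) = β⁻¹(h). -/
/-- if the injective actions `P ↷ X` and `S ↷ Y` are conjugate via a
homeomorphism `φ` and a semigroup isomorphism `α : P → S`, then (a) `β(ab⁻¹) = α(a)α(b)⁻¹`
is a well-defined group isomorphism `G → H`; (b) for `(x,g) ∈ X ⋊ P`, `β(g) ∈ Q_{φ(x)}` and
`φ(u(x,g)) = u(φ(x), β(g))`, and symmetrically with `β⁻¹`; consequently the actions are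
continuously orbit equivalent with `a(x,g) = β(g)` and `b(y,h) = β⁻¹(h)`. -/
theorem stmt_9 {G H : Type*} [Group G] [Countable G] [Group H] [Countable H]
    [TopologicalSpace G] [DiscreteTopology G] [TopologicalSpace H] [DiscreteTopology H]
    {X Y : Type*} [TopologicalSpace X] [CompactSpace X] [T2Space X]
    [SecondCountableTopology X]
    [TopologicalSpace Y] [CompactSpace Y] [T2Space Y] [SecondCountableTopology Y]
    (P : Set G) (hP1 : (1 : G) ∈ P) (hPmul : ∀ a ∈ P, ∀ b ∈ P, a * b ∈ P)
    (hPG : ∀ g : G, ∃ a ∈ P, ∃ b ∈ P, g = a * b⁻¹)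
    (S : Set H) (hS1 : (1 : H) ∈ S) (hSmul : ∀ a ∈ S, ∀ b ∈ S, a * b ∈ S)
    (hSH : ∀ h : H, ∃ a ∈ S, ∃ b ∈ S, h = a * b⁻¹)
    (θ : G → X → X)
    (hθc : ∀ a ∈ P, Continuous (θ a))
    (hθi : ∀ a ∈ P, Function.Injective (θ a))
    (hθ1 : θ 1 = id)
    (hθm : ∀ a ∈ P, ∀ b ∈ P, ∀ x : X, θ a (θ b x) = θ (b * a) x)
    (hθopen : ∀ a ∈ P, IsOpen (Set.range (θ a)))
    (ρ : H → Y → Y)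
    (hρc : ∀ s ∈ S, Continuous (ρ s))
    (hρi : ∀ s ∈ S, Function.Injective (ρ s))
    (hρ1 : ρ 1 = id)
    (hρm : ∀ a ∈ S, ∀ b ∈ S, ∀ y : Y, ρ a (ρ b y) = ρ (b * a) y)
    (hρopen : ∀ s ∈ S, IsOpen (Set.range (ρ s)))
    (u : X → G → X)
    (hu : ∀ x : X, ∀ g ∈ Qset P θ x, ∀ a ∈ P, ∀ b ∈ P,
      g = a * b⁻¹ → θ a x = θ b (u x g))
    (v : Y → H → Y)
    (hv : ∀ y : Y, ∀ h ∈ Qset S ρ y, ∀ a ∈ S, ∀ b ∈ S,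
      h = a * b⁻¹ → ρ a y = ρ b (v y h))
    (φ : X ≃ₜ Y) (α : G → H)
    (hαS : ∀ a ∈ P, α a ∈ S)
    (hαbij : Set.BijOn α P S)
    (hαmul : ∀ a ∈ P, ∀ b ∈ P, α (a * b) = α a * α b)
    (hconj : ∀ m ∈ P, ∀ x : X, φ (θ m x) = ρ (α m) (φ x))
    (β : G → H)
    (hβ : ∀ a ∈ P, ∀ b ∈ P, β (a * b⁻¹) = α a * (α b)⁻¹) :
    (∀ a ∈ P, ∀ b ∈ P, ∀ c ∈ P, ∀ d ∈ P,
      a * b⁻¹ = c * d⁻¹ → α a * (α b)⁻¹ = α c * (α d)⁻¹) ∧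
    Function.Bijective β ∧
    (∀ g g' : G, β (g * g') = β g * β g') ∧
    (∀ (x : X) (g : G), g ∈ Qset P θ x →
      β g ∈ Qset S ρ (φ x) ∧ φ (u x g) = v (φ x) (β g)) ∧
    (∀ (y : Y) (h : H), h ∈ Qset S ρ y → ∀ g : G, β g = h →
      g ∈ Qset P θ (φ.symm y) ∧ φ.symm (v y h) = u (φ.symm y) g) ∧
    Continuous (fun p : {q : X × G // q.2 ∈ Qset P θ q.1} => β p.1.2) ∧
    (∃ b : {q : Y × H // q.2 ∈ Qset S ρ q.1} → G, Continuous b ∧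
      (∀ q : {q : Y × H // q.2 ∈ Qset S ρ q.1}, β (b q) = q.1.2) ∧
      (∀ q : {q : Y × H // q.2 ∈ Qset S ρ q.1},
        b q ∈ Qset P θ (φ.symm q.1.1) ∧ φ.symm (v q.1.1 q.1.2) = u (φ.symm q.1.1) (b q))) := by
  -- (a) well-definedness
  have key : ∀ a ∈ P, ∀ b ∈ P, ∀ c ∈ P, ∀ d ∈ P,
      a * b⁻¹ = c * d⁻¹ → α a * (α b)⁻¹ = α c * (α d)⁻¹ := by
    intro a ha b hb c hc d hd heq
    obtain ⟨p, hp, q, hq, hpq⟩ := hPG (d⁻¹ * b)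
    have hbq : b * q = d * p := by
      calc b * q = d * (d⁻¹ * b) * q := by group
        _ = d * (p * q⁻¹) * q := by rw [hpq]
        _ = d * p := by group
    have haq : a * q = c * p := by
      calc a * q = (a * b⁻¹) * (b * q) := by group
        _ = (c * d⁻¹) * (d * p) := by rw [heq, hbq]
        _ = c * p := by group
    have h1 : α a * α q = α c * α p := by
      rw [← hαmul a ha q hq, ← hαmul c hc p hp, haq]
    have h2 : α b * α q = α d * α p := by
      rw [← hαmul b hb q hq, ← hαmul d hd p hp, hbq]
    calc α a * (α b)⁻¹ = (α a * α q) * (α b * α q)⁻¹ := by group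
      _ = (α c * α p) * (α d * α p)⁻¹ := by rw [h1, h2]
      _ = α c * (α d)⁻¹ := by group
  -- β is a homomorphism
  have hom : ∀ g g' : G, β (g * g') = β g * β g' := by
    intro g g'
    obtain ⟨a, ha, b, hb, hg⟩ := hPG g
    obtain ⟨c, hc, d, hd, hg'⟩ := hPG g'
    obtain ⟨p, hp, q, hq, hpq⟩ := hPG (b⁻¹ * c)
    have hcq : c * q = b * p := by
      calc c * q = b * (b⁻¹ * c) * q := by group
        _ = b * (p * q⁻¹) * q := by rw [hpq]
        _ = b * p := by group
    have hgg' : g * g' = (a * p) * (d * q)⁻¹ := by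
      rw [hg, hg']
      calc a * b⁻¹ * (c * d⁻¹) = a * (b⁻¹ * c) * d⁻¹ := by group
        _ = a * (p * q⁻¹) * d⁻¹ := by rw [hpq]
        _ = (a * p) * (d * q)⁻¹ := by group
    have h3 : α c * α q = α b * α p := by
      rw [← hαmul c hc q hq, ← hαmul b hb p hp, hcq]
    rw [hgg', hβ (a * p) (hPmul a ha p hp) (d * q) (hPmul d hd q hq),
      hg, hg', hβ a ha b hb, hβ c hc d hd, hαmul a ha p hp, hαmul d hd q hq]
    calc α a * α p * (α d * α q)⁻¹
        = α a * (α b)⁻¹ * (α b * α p) * (α q)⁻¹ * (α d)⁻¹ := by group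
      _ = α a * (α b)⁻¹ * (α c * α q) * (α q)⁻¹ * (α d)⁻¹ := by rw [h3]
      _ = α a * (α b)⁻¹ * (α c * (α d)⁻¹) := by group
  have hβ1 : β 1 = 1 := by
    have h := hβ 1 hP1 1 hP1
    simpa using h
  have hinv : ∀ g : G, β g⁻¹ = (β g)⁻¹ := by
    intro g
    have h := hom g g⁻¹
    rw [mul_inv_cancel, hβ1] at h
    exact eq_inv_of_mul_eq_one_right h.symm
  have hker : ∀ g : G, β g = 1 → g = 1 := by
    intro g hg1
    obtain ⟨a, ha, b, hb, hg⟩ := hPG g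
    rw [hg, hβ a ha b hb, mul_inv_eq_one] at hg1
    have hab : a = b := hαbij.injOn ha hb hg1
    rw [hg, hab, mul_inv_cancel]
  have hβinj : Function.Injective β := by
    intro g g' hgg'
    have h : β (g * g'⁻¹) = 1 := by
      rw [hom, hinv, hgg', mul_inv_cancel]
    exact mul_inv_eq_one.mp (hker _ h)
  have hβsurj : Function.Surjective β := by
    intro h
    obtain ⟨s, hs, t, ht, hst⟩ := hSH h
    obtain ⟨a, ha, has⟩ := hαbij.surjOn hs
    obtain ⟨b, hb, hbt⟩ := hαbij.surjOn ht
    exact ⟨a * b⁻¹, by rw [hβ a ha b hb, has, hbt, ← hst]⟩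
  -- (b) forward direction
  have fwd : ∀ (x : X) (g : G), g ∈ Qset P θ x →
      β g ∈ Qset S ρ (φ x) ∧ φ (u x g) = v (φ x) (β g) := by
    intro x g hg
    obtain ⟨a, ha, b, hb, y, hgab, hxy⟩ := hg
    have hβg : β g = α a * (α b)⁻¹ := by rw [hgab]; exact hβ a ha b hb
    have hmem : β g ∈ Qset S ρ (φ x) :=
      ⟨α a, hαS a ha, α b, hαS b hb, φ y, hβg, by
        rw [← hconj a ha x, ← hconj b hb y, hxy]⟩
    refine ⟨hmem, ?_⟩
    have e1 : ρ (α a) (φ x) = ρ (α b) (v (φ x) (β g)) :=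
      hv (φ x) (β g) hmem (α a) (hαS a ha) (α b) (hαS b hb) hβg
    have e2 : θ a x = θ b (u x g) := hu x g ⟨a, ha, b, hb, y, hgab, hxy⟩ a ha b hb hgab
    have e3 : ρ (α a) (φ x) = ρ (α b) (φ (u x g)) := by
      rw [← hconj a ha x, ← hconj b hb, e2]
    exact hρi (α b) (hαS b hb) (e3.symm.trans e1)
  -- (b) backward direction
  have bwd : ∀ (y : Y) (h : H), h ∈ Qset S ρ y → ∀ g : G, β g = h →
      g ∈ Qset P θ (φ.symm y) ∧ φ.symm (v y h) = u (φ.symm y) g := by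
    intro y h hh g hgh
    obtain ⟨s, hs, t, ht, z, hhst, hyz⟩ := hh
    obtain ⟨a, ha, has⟩ := hαbij.surjOn hs
    obtain ⟨b, hb, hbt⟩ := hαbij.surjOn ht
    have hgab : g = a * b⁻¹ := by
      apply hβinj
      rw [hgh, hβ a ha b hb, has, hbt, hhst]
    have hθa : θ a (φ.symm y) = θ b (φ.symm z) := by
      apply φ.injective
      rw [hconj a ha, hconj b hb, φ.apply_symm_apply, φ.apply_symm_apply, has, hbt, hyz]
    have hmem : g ∈ Qset P θ (φ.symm y) := ⟨a, ha, b, hb, φ.symm z, hgab, hθa⟩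
    refine ⟨hmem, ?_⟩
    have e2 : θ a (φ.symm y) = θ b (u (φ.symm y) g) := hu _ g hmem a ha b hb hgab
    have e1 : ρ s y = ρ t (v y h) := hv y h ⟨s, hs, t, ht, z, hhst, hyz⟩ s hs t ht hhst
    have e3 : θ a (φ.symm y) = θ b (φ.symm (v y h)) := by
      apply φ.injective
      rw [hconj a ha, hconj b hb, φ.apply_symm_apply, φ.apply_symm_apply, has, hbt, e1]
    exact hθi b hb (e3.symm.trans e2)
  refine ⟨key, ⟨hβinj, hβsurj⟩, hom, fwd, bwd, ?_, ?_⟩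
  · show Continuous (β ∘ fun p : {q : X × G // q.2 ∈ Qset P θ q.1} => p.1.2)
    exact continuous_of_discreteTopology.comp continuous_subtype_val.snd
  · refine ⟨fun q => Function.invFun β q.1.2, ?_, ?_, ?_⟩
    · show Continuous ((Function.invFun β) ∘ fun q : {q : Y × H // q.2 ∈ Qset S ρ q.1} => q.1.2)
      exact continuous_of_discreteTopology.comp continuous_subtype_val.snd
    · intro q
      exact Function.rightInverse_invFun hβsurj q.1.2
    · intro q
      exact bwd q.1.1 q.1.2 q.2 _ (Function.rightInverse_invFun hβsurj q.1.2)
end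

section
/- Suppose both actions θ and ρ are topologically free and are continuously orbit equivalent via φ, a, b. Then a and b are continuous cocycles: whenever (x, g₁) ∈ X ⋊ P and (u(x, g₁), g₂) ∈ X ⋊ P, one has a(x, g₁g₂) = a(x, g₁) · a(u(x, g₁), g₂); and whenever (y, h₁) ∈ Y ⋊ S and (u(y, h₁), h₂) ∈ Y ⋊ S, one has b(y, h₁h₂) = b(y, h₁) · b(u(y, h₁), h₂). -/
namespace COEAux

open Topology

structure Sys (G X : Type*) [Group G] [TopologicalSpace X] where
  P : Set G
  mul_mem : ∀ a ∈ P, ∀ b ∈ P, a * b ∈ P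
  decomp : ∀ g : G, ∃ a ∈ P, ∃ b ∈ P, g = a * b⁻¹
  θ : G → X → X
  cont : ∀ a ∈ P, Continuous (θ a)
  inj : ∀ a ∈ P, Function.Injective (θ a)
  map_mul : ∀ a ∈ P, ∀ b ∈ P, ∀ x : X, θ a (θ b x) = θ (b * a) x
  openRange : ∀ a ∈ P, IsOpen (Set.range (θ a))
  u : X → G → X
  spec : ∀ x : X, ∀ g ∈ Qset P θ x, ∀ a ∈ P, ∀ b ∈ P, g = a * b⁻¹ → θ a x = θ b (u x g)

variable {G X : Type*} [Group G] [TopologicalSpace X]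

abbrev Sys.Q (S : Sys G X) (x : X) : Set G := Qset S.P S.θ x

theorem Sys.uniq (S : Sys G X) {x z : X} {g a b : G} (hg : g ∈ S.Q x) (ha : a ∈ S.P)
    (hb : b ∈ S.P) (hab : g = a * b⁻¹) (hz : S.θ a x = S.θ b z) : z = S.u x g :=
  S.inj b hb (hz.symm.trans (S.spec x g hg a ha b hb hab))

theorem Sys.comp (S : Sys G X) {x : X} {g₁ g₂ : G} (h1 : g₁ ∈ S.Q x)
    (h2 : g₂ ∈ S.Q (S.u x g₁)) :
    g₁ * g₂ ∈ S.Q x ∧ S.u x (g₁ * g₂) = S.u (S.u x g₁) g₂ := by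
  obtain ⟨a₁, ha₁, b₁, hb₁, w₁, hg₁, hw₁⟩ := h1
  have h1 : g₁ ∈ S.Q x := ⟨a₁, ha₁, b₁, hb₁, w₁, hg₁, hw₁⟩
  obtain ⟨a₂, ha₂, b₂, hb₂, w₂, hg₂, hw₂⟩ := h2
  have h2 : g₂ ∈ S.Q (S.u x g₁) := ⟨a₂, ha₂, b₂, hb₂, w₂, hg₂, hw₂⟩
  obtain ⟨c, hc, d, hd, hcd⟩ := S.decomp (b₁⁻¹ * a₂)
  have key : a₂ * d = b₁ * c := by
    rw [inv_mul_eq_iff_eq_mul] at hcd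
    rw [hcd]; group
  have hdecomp : g₁ * g₂ = (a₁ * c) * (b₂ * d)⁻¹ := by
    have hc2 : c = b₁⁻¹ * (a₂ * d) := by rw [key]; group
    rw [hg₁, hg₂, hc2]; group
  have e1 : S.θ (a₁ * c) x = S.θ (b₂ * d) (S.u (S.u x g₁) g₂) := by
    calc S.θ (a₁ * c) x = S.θ c (S.θ a₁ x) := (S.map_mul c hc a₁ ha₁ x).symm
    _ = S.θ c (S.θ b₁ (S.u x g₁)) := by rw [S.spec x g₁ h1 a₁ ha₁ b₁ hb₁ hg₁]
    _ = S.θ (b₁ * c) (S.u x g₁) := S.map_mul c hc b₁ hb₁ _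
    _ = S.θ (a₂ * d) (S.u x g₁) := by rw [key]
    _ = S.θ d (S.θ a₂ (S.u x g₁)) := (S.map_mul d hd a₂ ha₂ _).symm
    _ = S.θ d (S.θ b₂ (S.u (S.u x g₁) g₂)) := by
          rw [S.spec (S.u x g₁) g₂ h2 a₂ ha₂ b₂ hb₂ hg₂]
    _ = S.θ (b₂ * d) (S.u (S.u x g₁) g₂) := S.map_mul d hd b₂ hb₂ _
  have hmem : g₁ * g₂ ∈ S.Q x :=
    ⟨a₁ * c, S.mul_mem a₁ ha₁ c hc, b₂ * d, S.mul_mem b₂ hb₂ d hd, _, hdecomp, e1⟩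
  exact ⟨hmem, (S.uniq hmem (S.mul_mem a₁ ha₁ c hc) (S.mul_mem b₂ hb₂ d hd) hdecomp e1).symm⟩

theorem Sys.diff (S : Sys G X) {x : X} {g g' : G} (h : g ∈ S.Q x) (h' : g' ∈ S.Q x) :
    g⁻¹ * g' ∈ S.Q (S.u x g) ∧ S.u (S.u x g) (g⁻¹ * g') = S.u x g' := by
  obtain ⟨a, ha, b, hb, w, hab, hw⟩ := h
  have h : g ∈ S.Q x := ⟨a, ha, b, hb, w, hab, hw⟩
  obtain ⟨a', ha', b', hb', w', hab', hw'⟩ := h'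
  have h' : g' ∈ S.Q x := ⟨a', ha', b', hb', w', hab', hw'⟩
  obtain ⟨c, hc, d, hd, hcd⟩ := S.decomp (a⁻¹ * a')
  have key : a' * d = a * c := by
    rw [inv_mul_eq_iff_eq_mul] at hcd
    rw [hcd]; group
  have hdecomp : g⁻¹ * g' = (b * c) * (b' * d)⁻¹ := by
    have hc2 : c = a⁻¹ * (a' * d) := by rw [key]; group
    rw [hab, hab', hc2]; group
  have e1 : S.θ (b * c) (S.u x g) = S.θ (b' * d) (S.u x g') := by
    calc S.θ (b * c) (S.u x g) = S.θ c (S.θ b (S.u x g)) := (S.map_mul c hc b hb _).symm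
    _ = S.θ c (S.θ a x) := by rw [← S.spec x g h a ha b hb hab]
    _ = S.θ (a * c) x := S.map_mul c hc a ha _
    _ = S.θ (a' * d) x := by rw [key]
    _ = S.θ d (S.θ a' x) := (S.map_mul d hd a' ha' _).symm
    _ = S.θ d (S.θ b' (S.u x g')) := by rw [S.spec x g' h' a' ha' b' hb' hab']
    _ = S.θ (b' * d) (S.u x g') := S.map_mul d hd b' hb' _
  have hmem : g⁻¹ * g' ∈ S.Q (S.u x g) :=
    ⟨b * c, S.mul_mem b hb c hc, b' * d, S.mul_mem b' hb' d hd, _, hdecomp, e1⟩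
  exact ⟨hmem, (S.uniq hmem (S.mul_mem b hb c hc) (S.mul_mem b' hb' d hd) hdecomp e1).symm⟩

def Sys.Dom (S : Sys G X) (a b : G) : Set X := S.θ a ⁻¹' Set.range (S.θ b)

theorem Sys.dom_open (S : Sys G X) {a b : G} (ha : a ∈ S.P) (hb : b ∈ S.P) :
    IsOpen (S.Dom a b) := (S.openRange b hb).preimage (S.cont a ha)

theorem Sys.mem_Q_of_dom (S : Sys G X) {a b : G} (ha : a ∈ S.P) (hb : b ∈ S.P) {x : X}
    (hx : x ∈ S.Dom a b) : a * b⁻¹ ∈ S.Q x := by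
  obtain ⟨z, hz⟩ := hx
  exact ⟨a, ha, b, hb, z, rfl, hz.symm⟩

theorem Sys.closedEmb (S : Sys G X) [CompactSpace X] [T2Space X] {b : G} (hb : b ∈ S.P) :
    IsClosedEmbedding (S.θ b) := (S.cont b hb).isClosedEmbedding (S.inj b hb)

theorem Sys.openMap (S : Sys G X) [CompactSpace X] [T2Space X] {b : G} (hb : b ∈ S.P) :
    IsOpenMap (S.θ b) :=
  IsOpenEmbedding.isOpenMap ⟨(S.closedEmb hb).isEmbedding, S.openRange b hb⟩

theorem Sys.continuousOn_u (S : Sys G X) [CompactSpace X] [T2Space X] {a b : G}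
    (ha : a ∈ S.P) (hb : b ∈ S.P) :
    ContinuousOn (fun x => S.u x (a * b⁻¹)) (S.Dom a b) := by
  rw [continuousOn_iff_continuous_restrict]
  rw [(S.closedEmb hb).isEmbedding.continuous_iff]
  have : S.θ b ∘ (S.Dom a b).restrict (fun x => S.u x (a * b⁻¹)) =
      fun z : S.Dom a b => S.θ a z.1 := by
    funext z
    exact (S.spec z.1 _ (S.mem_Q_of_dom ha hb z.2) a ha b hb rfl).symm
  refine (congrArg Continuous this).mpr ?_
  exact (S.cont a ha).comp continuous_subtype_val

variable {H Y : Type*} [Group H] [TopologicalSpace Y]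

theorem cocycle_ptwise [TopologicalSpace G]
    (SX : Sys G X) (SY : Sys H Y) (φ : X ≃ₜ Y)
    (a : {q : X × G // q.2 ∈ SX.Q q.1} → H)
    (ha : ∀ p : {q : X × G // q.2 ∈ SX.Q q.1},
      a p ∈ SY.Q (φ p.1.1) ∧ φ (SX.u p.1.1 p.1.2) = SY.u (φ p.1.1) (a p))
    (x : X) (g₁ g₂ : G) (h1 : g₁ ∈ SX.Q x) (h2 : g₂ ∈ SX.Q (SX.u x g₁))
    (h3 : g₁ * g₂ ∈ SX.Q x)
    (hfreept : ∀ h ∈ SY.Q (φ (SX.u x (g₁ * g₂))), h ≠ 1 →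
      SY.u (φ (SX.u x (g₁ * g₂))) h ≠ φ (SX.u x (g₁ * g₂))) :
    a ⟨(x, g₁ * g₂), h3⟩ = a ⟨(x, g₁), h1⟩ * a ⟨(SX.u x g₁, g₂), h2⟩ := by
  have m1 : a ⟨(x, g₁), h1⟩ ∈ SY.Q (φ x) := (ha ⟨(x, g₁), h1⟩).1
  have e1 : φ (SX.u x g₁) = SY.u (φ x) (a ⟨(x, g₁), h1⟩) := (ha ⟨(x, g₁), h1⟩).2
  have m2 : a ⟨(SX.u x g₁, g₂), h2⟩ ∈ SY.Q (φ (SX.u x g₁)) :=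
    (ha ⟨(SX.u x g₁, g₂), h2⟩).1
  have e2 : φ (SX.u (SX.u x g₁) g₂) = SY.u (φ (SX.u x g₁)) (a ⟨(SX.u x g₁, g₂), h2⟩) :=
    (ha ⟨(SX.u x g₁, g₂), h2⟩).2
  have m3 : a ⟨(x, g₁ * g₂), h3⟩ ∈ SY.Q (φ x) := (ha ⟨(x, g₁ * g₂), h3⟩).1
  have e3 : φ (SX.u x (g₁ * g₂)) = SY.u (φ x) (a ⟨(x, g₁ * g₂), h3⟩) :=
    (ha ⟨(x, g₁ * g₂), h3⟩).2
  have hx : SX.u x (g₁ * g₂) = SX.u (SX.u x g₁) g₂ := (SX.comp h1 h2).2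
  have m2' : a ⟨(SX.u x g₁, g₂), h2⟩ ∈ SY.Q (SY.u (φ x) (a ⟨(x, g₁), h1⟩)) :=
    e1 ▸ m2
  have hcomp := SY.comp m1 m2'
  have veq : SY.u (φ x) (a ⟨(x, g₁), h1⟩ * a ⟨(SX.u x g₁, g₂), h2⟩) =
      SY.u (φ x) (a ⟨(x, g₁ * g₂), h3⟩) := by
    rw [hcomp.2, ← e1, ← e2, ← hx, ← e3]
  have hdiff := SY.diff m3 hcomp.1
  have hfreept' : ∀ h ∈ SY.Q (SY.u (φ x) (a ⟨(x, g₁ * g₂), h3⟩)), h ≠ 1 →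
      SY.u (SY.u (φ x) (a ⟨(x, g₁ * g₂), h3⟩)) h ≠
        SY.u (φ x) (a ⟨(x, g₁ * g₂), h3⟩) := by
    rw [← e3]; exact hfreept
  have k1 : (a ⟨(x, g₁ * g₂), h3⟩)⁻¹ *
      (a ⟨(x, g₁), h1⟩ * a ⟨(SX.u x g₁, g₂), h2⟩) = 1 := by
    by_contra hk
    exact hfreept' _ hdiff.1 hk (hdiff.2.trans veq)
  exact inv_mul_eq_one.mp k1

theorem cocycle [TopologicalSpace G] [TopologicalSpace H] [DiscreteTopology H]
    [CompactSpace X] [T2Space X]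
    (SX : Sys G X) (SY : Sys H Y)
    (hfree : Dense {y : Y | ∀ h ∈ SY.Q y, h ≠ 1 → SY.u y h ≠ y})
    (φ : X ≃ₜ Y)
    (a : {q : X × G // q.2 ∈ SX.Q q.1} → H)
    (hacont : Continuous a)
    (ha : ∀ p : {q : X × G // q.2 ∈ SX.Q q.1},
      a p ∈ SY.Q (φ p.1.1) ∧ φ (SX.u p.1.1 p.1.2) = SY.u (φ p.1.1) (a p))
    (x : X) (g₁ g₂ : G) (h1 : g₁ ∈ SX.Q x) (h2 : g₂ ∈ SX.Q (SX.u x g₁))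
    (h3 : g₁ * g₂ ∈ SX.Q x) :
    a ⟨(x, g₁ * g₂), h3⟩ = a ⟨(x, g₁), h1⟩ * a ⟨(SX.u x g₁, g₂), h2⟩ := by
  obtain ⟨a₁, ha₁, b₁, hb₁, w₁, hg₁, hw₁⟩ := h1
  have h1 : g₁ ∈ SX.Q x := ⟨a₁, ha₁, b₁, hb₁, w₁, hg₁, hw₁⟩
  obtain ⟨a₂, ha₂, b₂, hb₂, w₂, hg₂, hw₂⟩ := h2
  have h2 : g₂ ∈ SX.Q (SX.u x g₁) := ⟨a₂, ha₂, b₂, hb₂, w₂, hg₂, hw₂⟩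
  obtain ⟨a₃, ha₃, b₃, hb₃, w₃, hg₃, hw₃⟩ := h3
  have h3 : g₁ * g₂ ∈ SX.Q x := ⟨a₃, ha₃, b₃, hb₃, w₃, hg₃, hw₃⟩
  -- the open set U where everything is defined
  have hcu : ContinuousOn (fun x' => SX.u x' g₁) (SX.Dom a₁ b₁) := by
    rw [hg₁]; exact SX.continuousOn_u ha₁ hb₁
  set D2 : Set X := SX.Dom a₁ b₁ ∩
    (fun x' => SX.θ a₂ (SX.u x' g₁)) ⁻¹' Set.range (SX.θ b₂) with hD2
  have hD2open : IsOpen D2 :=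
    ContinuousOn.isOpen_inter_preimage ((SX.cont a₂ ha₂).comp_continuousOn hcu)
      (SX.dom_open ha₁ hb₁) (SX.openRange b₂ hb₂)
  set U : Set X := D2 ∩ SX.Dom a₃ b₃ with hU
  have hUopen : IsOpen U := hD2open.inter (SX.dom_open ha₃ hb₃)
  have hxU : x ∈ U := ⟨⟨⟨w₁, hw₁.symm⟩, ⟨w₂, hw₂.symm⟩⟩, ⟨w₃, hw₃.symm⟩⟩
  -- memberships on U
  have p1 : ∀ x' ∈ U, g₁ ∈ SX.Q x' := fun x' hx' =>
    hg₁ ▸ SX.mem_Q_of_dom ha₁ hb₁ hx'.1.1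
  have p2 : ∀ x' ∈ U, g₂ ∈ SX.Q (SX.u x' g₁) := by
    intro x' hx'
    obtain ⟨w, hw⟩ := hx'.1.2
    exact ⟨a₂, ha₂, b₂, hb₂, w, hg₂, hw.symm⟩
  have p3 : ∀ x' ∈ U, g₁ * g₂ ∈ SX.Q x' := fun x' hx' =>
    hg₃ ▸ SX.mem_Q_of_dom ha₃ hb₃ hx'.2
  -- the locally constant comparison map
  set F : U → H × H × H := fun z =>
    (a ⟨(z.1, g₁), p1 z.1 z.2⟩, a ⟨(SX.u z.1 g₁, g₂), p2 z.1 z.2⟩,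
      a ⟨(z.1, g₁ * g₂), p3 z.1 z.2⟩) with hF
  have hucont : Continuous fun z : U => SX.u z.1 g₁ := by
    have := (hcu.mono (fun x' hx' => (hU ▸ hx' : x' ∈ U).1.1)).restrict
    exact this
  have hFcont : Continuous F := by
    refine Continuous.prodMk ?_ (Continuous.prodMk ?_ ?_)
    · exact hacont.comp (Continuous.subtype_mk
        (continuous_subtype_val.prodMk continuous_const) _)
    · exact hacont.comp (Continuous.subtype_mk (hucont.prodMk continuous_const) _)
    · exact hacont.comp (Continuous.subtype_mk
        (continuous_subtype_val.prodMk continuous_const) _)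
  -- V : the open set where F agrees with its value at x
  set V : Set X := Subtype.val '' (F ⁻¹' {F ⟨x, hxU⟩}) with hV
  have hVopen : IsOpen V :=
    hUopen.isOpenMap_subtype_val _ (hFcont.isOpen_preimage _ (isOpen_discrete _))
  have hxV : x ∈ V := ⟨⟨x, hxU⟩, rfl, rfl⟩
  have hVsub : V ⊆ U := by rintro _ ⟨z, -, rfl⟩; exact z.2
  -- find a point x* in V whose image under φ ∘ u(·, g₁g₂) is a free point
  set A : Set X := SX.θ b₃ ⁻¹' (SX.θ a₃ '' V) with hA
  have hAopen : IsOpen A := ((SX.openMap ha₃) V hVopen).preimage (SX.cont b₃ hb₃)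
  have hAne : A.Nonempty := by
    refine ⟨SX.u x (g₁ * g₂), ⟨x, hxV, ?_⟩⟩
    exact SX.spec x _ h3 a₃ ha₃ b₃ hb₃ hg₃
  have hdense : Dense (⇑φ ⁻¹' {y : Y | ∀ h ∈ SY.Q y, h ≠ 1 → SY.u y h ≠ y}) :=
    hfree.preimage φ.isOpenMap
  obtain ⟨z, hzA, hzfree⟩ := hdense.inter_open_nonempty A hAopen hAne
  obtain ⟨xs, hxsV, hxseq⟩ := hzA
  have hxsU : xs ∈ U := hVsub hxsV
  have hz : z = SX.u xs (g₁ * g₂) :=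
    SX.uniq (p3 xs hxsU) ha₃ hb₃ hg₃ hxseq
  -- apply the pointwise result at x*
  have hpt := cocycle_ptwise SX SY φ a ha xs g₁ g₂ (p1 xs hxsU) (p2 xs hxsU)
    (p3 xs hxsU) (by rw [← hz]; exact hzfree)
  -- transfer back to x using local constancy of F
  obtain ⟨zs, hzs, hzsval⟩ := hxsV
  have hFeq : F zs = F ⟨x, hxU⟩ := hzs
  have c1 : a ⟨(xs, g₁), p1 xs hxsU⟩ = a ⟨(x, g₁), p1 x hxU⟩ := by
    have := congrArg Prod.fst hFeq
    simpa [hF, hzsval] using this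
  have c2 : a ⟨(SX.u xs g₁, g₂), p2 xs hxsU⟩ = a ⟨(SX.u x g₁, g₂), p2 x hxU⟩ := by
    have := congrArg (fun p => p.2.1) hFeq
    simpa [hF, hzsval] using this
  have c3 : a ⟨(xs, g₁ * g₂), p3 xs hxsU⟩ = a ⟨(x, g₁ * g₂), p3 x hxU⟩ := by
    have := congrArg (fun p => p.2.2) hFeq
    simpa [hF, hzsval] using this
  rw [c1, c2, c3] at hpt
  exact hpt

end COEAux


/-- for topologically free injective actions that are continuously orbit
equivalent via `(φ, a, b)`, the maps `a` and `b` are (continuous) cocycles. -/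
theorem stmt_10 {G H : Type*} [Group G] [Countable G] [Group H] [Countable H]
    [TopologicalSpace G] [DiscreteTopology G] [TopologicalSpace H] [DiscreteTopology H]
    {X Y : Type*} [TopologicalSpace X] [CompactSpace X] [T2Space X]
    [SecondCountableTopology X]
    [TopologicalSpace Y] [CompactSpace Y] [T2Space Y] [SecondCountableTopology Y]
    (P : Set G) (hP1 : (1 : G) ∈ P) (hPmul : ∀ a ∈ P, ∀ b ∈ P, a * b ∈ P)
    (hPG : ∀ g : G, ∃ a ∈ P, ∃ b ∈ P, g = a * b⁻¹)
    (S : Set H) (hS1 : (1 : H) ∈ S) (hSmul : ∀ a ∈ S, ∀ b ∈ S, a * b ∈ S)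
    (hSH : ∀ h : H, ∃ a ∈ S, ∃ b ∈ S, h = a * b⁻¹)
    (θ : G → X → X)
    (hθc : ∀ a ∈ P, Continuous (θ a))
    (hθi : ∀ a ∈ P, Function.Injective (θ a))
    (hθ1 : θ 1 = id)
    (hθm : ∀ a ∈ P, ∀ b ∈ P, ∀ x : X, θ a (θ b x) = θ (b * a) x)
    (hθopen : ∀ a ∈ P, IsOpen (Set.range (θ a)))
    (ρ : H → Y → Y)
    (hρc : ∀ s ∈ S, Continuous (ρ s))
    (hρi : ∀ s ∈ S, Function.Injective (ρ s))
    (hρ1 : ρ 1 = id)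
    (hρm : ∀ a ∈ S, ∀ b ∈ S, ∀ y : Y, ρ a (ρ b y) = ρ (b * a) y)
    (hρopen : ∀ s ∈ S, IsOpen (Set.range (ρ s)))
    (u : X → G → X)
    (hu : ∀ x : X, ∀ g ∈ Qset P θ x, ∀ a ∈ P, ∀ b ∈ P,
      g = a * b⁻¹ → θ a x = θ b (u x g))
    (v : Y → H → Y)
    (hv : ∀ y : Y, ∀ h ∈ Qset S ρ y, ∀ a ∈ S, ∀ b ∈ S,
      h = a * b⁻¹ → ρ a y = ρ b (v y h))
    (hfreeX : Dense {x : X | ∀ g ∈ Qset P θ x, g ≠ 1 → u x g ≠ x})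
    (hfreeY : Dense {y : Y | ∀ h ∈ Qset S ρ y, h ≠ 1 → v y h ≠ y})
    (φ : X ≃ₜ Y)
    (a : {q : X × G // q.2 ∈ Qset P θ q.1} → H)
    (b : {q : Y × H // q.2 ∈ Qset S ρ q.1} → G)
    (hacont : Continuous a) (hbcont : Continuous b)
    (ha : ∀ p : {q : X × G // q.2 ∈ Qset P θ q.1},
      a p ∈ Qset S ρ (φ p.1.1) ∧ φ (u p.1.1 p.1.2) = v (φ p.1.1) (a p))
    (hb : ∀ q : {q : Y × H // q.2 ∈ Qset S ρ q.1},
      b q ∈ Qset P θ (φ.symm q.1.1) ∧ φ.symm (v q.1.1 q.1.2) = u (φ.symm q.1.1) (b q)) :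
    (∀ (x : X) (g₁ g₂ : G) (h1 : g₁ ∈ Qset P θ x) (h2 : g₂ ∈ Qset P θ (u x g₁))
      (h3 : g₁ * g₂ ∈ Qset P θ x),
      a ⟨(x, g₁ * g₂), h3⟩ = a ⟨(x, g₁), h1⟩ * a ⟨(u x g₁, g₂), h2⟩) ∧
    (∀ (y : Y) (h₁ h₂ : H) (k1 : h₁ ∈ Qset S ρ y) (k2 : h₂ ∈ Qset S ρ (v y h₁))
      (k3 : h₁ * h₂ ∈ Qset S ρ y),
      b ⟨(y, h₁ * h₂), k3⟩ = b ⟨(y, h₁), k1⟩ * b ⟨(v y h₁, h₂), k2⟩) := by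
  constructor
  · exact fun x g₁ g₂ h1 h2 h3 =>
      COEAux.cocycle ⟨P, hPmul, hPG, θ, hθc, hθi, hθm, hθopen, u, hu⟩
        ⟨S, hSmul, hSH, ρ, hρc, hρi, hρm, hρopen, v, hv⟩ hfreeY φ a hacont ha
        x g₁ g₂ h1 h2 h3
  · exact fun y h₁ h₂ k1 k2 k3 =>
      COEAux.cocycle ⟨S, hSmul, hSH, ρ, hρc, hρi, hρm, hρopen, v, hv⟩
        ⟨P, hPmul, hPG, θ, hθc, hθi, hθm, hθopen, u, hu⟩ hfreeX φ.symm b hbcont hb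
        y h₁ h₂ k1 k2 k3
end

section
/- Suppose both actions θ and ρ are topologically free and are continuously orbit equivalent via φ, a, b. Then b(φ(x), a(x, g)) = g for every (x, g) ∈ X ⋊ P, and a(φ⁻¹(y), b(y, h)) = h for every (y, h) ∈ Y ⋊ S. -/
lemma lemOpen {G X : Type*} [Group G] [TopologicalSpace X]
    (P : Set G) (θ : G → X → X)
    (hθc : ∀ a ∈ P, Continuous (θ a))
    (hθopen : ∀ a ∈ P, IsOpen (Set.range (θ a)))
    (g : G) : IsOpen {x : X | g ∈ Qset P θ x} := by
  rw [isOpen_iff_forall_mem_open]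
  rintro x ⟨c, hc, d, hd, y, hgy, hxy⟩
  refine ⟨θ c ⁻¹' (Set.range (θ d)), ?_, ((hθopen d hd).preimage (hθc c hc)), ⟨y, hxy.symm⟩⟩
  rintro x' ⟨y', hy'⟩
  exact ⟨c, hc, d, hd, y', hgy, hy'.symm⟩

lemma lemB {G X : Type*} [Group G] (P : Set G)
    (hPmul : ∀ a ∈ P, ∀ b ∈ P, a * b ∈ P)
    (hPG : ∀ g : G, ∃ a ∈ P, ∃ b ∈ P, g = a * b⁻¹)
    (θ : G → X → X)
    (hθi : ∀ a ∈ P, Function.Injective (θ a))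
    (hθm : ∀ a ∈ P, ∀ b ∈ P, ∀ x : X, θ a (θ b x) = θ (b * a) x)
    (u : X → G → X)
    (hu : ∀ x : X, ∀ g ∈ Qset P θ x, ∀ a ∈ P, ∀ b ∈ P, g = a * b⁻¹ → θ a x = θ b (u x g))
    {x : X} (hx : ∀ g ∈ Qset P θ x, g ≠ 1 → u x g ≠ x)
    {g g' : G} (hg : g ∈ Qset P θ x) (hg' : g' ∈ Qset P θ x)
    (heq : u x g = u x g') : g = g' := by
  obtain ⟨c1, hc1, d1, hd1, y1, hgd1, hy1⟩ := hg
  obtain ⟨c2, hc2, d2, hd2, y2, hgd2, hy2⟩ := hg'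
  have hg : g ∈ Qset P θ x := ⟨c1, hc1, d1, hd1, y1, hgd1, hy1⟩
  have hg' : g' ∈ Qset P θ x := ⟨c2, hc2, d2, hd2, y2, hgd2, hy2⟩
  have h1 : θ c1 x = θ d1 (u x g) := hu x g hg c1 hc1 d1 hd1 hgd1
  have h2 : θ c2 x = θ d2 (u x g) := by
    rw [heq]; exact hu x g' hg' c2 hc2 d2 hd2 hgd2
  obtain ⟨p, hp, q, hq, hpq⟩ := hPG (d2⁻¹ * d1)
  have hd1q : d2 * p = d1 * q := by
    have hpe : p = d2⁻¹ * d1 * q := by rw [hpq]; group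
    rw [hpe]; group
  have key : θ (c2 * p) x = θ (c1 * q) x := by
    calc θ (c2 * p) x = θ p (θ c2 x) := (hθm p hp c2 hc2 x).symm
      _ = θ p (θ d2 (u x g)) := by rw [h2]
      _ = θ (d2 * p) (u x g) := hθm p hp d2 hd2 _
      _ = θ (d1 * q) (u x g) := by rw [hd1q]
      _ = θ q (θ d1 (u x g)) := (hθm q hq d1 hd1 _).symm
      _ = θ q (θ c1 x) := by rw [h1]
      _ = θ (c1 * q) x := hθm q hq c1 hc1 x
  have hcpP : c2 * p ∈ P := hPmul c2 hc2 p hp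
  have hcqP : c1 * q ∈ P := hPmul c1 hc1 q hq
  have hk : (c2 * p) * (c1 * q)⁻¹ ∈ Qset P θ x :=
    ⟨c2 * p, hcpP, c1 * q, hcqP, x, rfl, key⟩
  have huk : u x ((c2 * p) * (c1 * q)⁻¹) = x := by
    have h3 := hu x _ hk (c2 * p) hcpP (c1 * q) hcqP rfl
    exact hθi (c1 * q) hcqP (h3.symm.trans key)
  by_contra hne
  refine hx _ hk ?_ huk
  intro h
  apply hne
  have e0 : c2 * p = c1 * q := by rwa [mul_inv_eq_one] at h
  rw [hgd1, hgd2]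
  calc c1 * d1⁻¹ = (c1 * q) * (d1 * q)⁻¹ := by group
    _ = (c2 * p) * (d2 * p)⁻¹ := by rw [← e0, ← hd1q]
    _ = c2 * d2⁻¹ := by group

lemma half {G H : Type*} [Group G] [Group H]
    [TopologicalSpace G] [DiscreteTopology G] [TopologicalSpace H]
    {X Y : Type*} [TopologicalSpace X] [TopologicalSpace Y]
    (P : Set G) (hPmul : ∀ a ∈ P, ∀ b ∈ P, a * b ∈ P)
    (hPG : ∀ g : G, ∃ a ∈ P, ∃ b ∈ P, g = a * b⁻¹)
    (S : Set H)
    (θ : G → X → X)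
    (hθc : ∀ a ∈ P, Continuous (θ a))
    (hθi : ∀ a ∈ P, Function.Injective (θ a))
    (hθm : ∀ a ∈ P, ∀ b ∈ P, ∀ x : X, θ a (θ b x) = θ (b * a) x)
    (hθopen : ∀ a ∈ P, IsOpen (Set.range (θ a)))
    (ρ : H → Y → Y)
    (u : X → G → X)
    (hu : ∀ x : X, ∀ g ∈ Qset P θ x, ∀ a ∈ P, ∀ b ∈ P, g = a * b⁻¹ → θ a x = θ b (u x g))
    (v : Y → H → Y)
    (hfreeX : Dense {x : X | ∀ g ∈ Qset P θ x, g ≠ 1 → u x g ≠ x})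
    (φ : X ≃ₜ Y)
    (a : {q : X × G // q.2 ∈ Qset P θ q.1} → H)
    (b : {q : Y × H // q.2 ∈ Qset S ρ q.1} → G)
    (hacont : Continuous a) (hbcont : Continuous b)
    (ha : ∀ p : {q : X × G // q.2 ∈ Qset P θ q.1},
      a p ∈ Qset S ρ (φ p.1.1) ∧ φ (u p.1.1 p.1.2) = v (φ p.1.1) (a p))
    (hb : ∀ q : {q : Y × H // q.2 ∈ Qset S ρ q.1},
      b q ∈ Qset P θ (φ.symm q.1.1) ∧ φ.symm (v q.1.1 q.1.2) = u (φ.symm q.1.1) (b q)) :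
    ∀ p : {q : X × G // q.2 ∈ Qset P θ q.1},
      b ⟨(φ p.1.1, a p), (ha p).1⟩ = p.1.2 := by
  rintro ⟨⟨x, g⟩, hg⟩
  have hVopen : IsOpen {x' : X | g ∈ Qset P θ x'} := lemOpen P θ hθc hθopen g
  let f : {x' : X // g ∈ Qset P θ x'} → G := fun z =>
    b ⟨(φ z.1, a ⟨(z.1, g), z.2⟩), (ha ⟨(z.1, g), z.2⟩).1⟩
  have hfcont : Continuous f := by
    apply hbcont.comp
    apply Continuous.subtype_mk
    refine Continuous.prodMk (φ.continuous.comp continuous_subtype_val) ?_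
    exact hacont.comp (Continuous.subtype_mk (continuous_subtype_val.prodMk continuous_const) _)
  have hWopen : IsOpen (Subtype.val '' (f ⁻¹' {f ⟨x, hg⟩})) :=
    hVopen.isOpenMap_subtype_val _ ((isOpen_discrete _).preimage hfcont)
  obtain ⟨x', hx'free, hx'W⟩ := hfreeX.exists_mem_open hWopen ⟨x, ⟨⟨x, hg⟩, rfl, rfl⟩⟩
  obtain ⟨⟨x'', hx''V⟩, hfz, rfl⟩ := hx'W
  have hfz' : b ⟨(φ x'', a ⟨(x'', g), hx''V⟩), (ha ⟨(x'', g), hx''V⟩).1⟩ = f ⟨x, hg⟩ := hfz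
  have hq' := hb ⟨(φ x'', a ⟨(x'', g), hx''V⟩), (ha ⟨(x'', g), hx''V⟩).1⟩
  rw [hfz', Homeomorph.symm_apply_apply] at hq'
  have ha2 := (ha ⟨(x'', g), hx''V⟩).2
  have heq : u x'' g = u x'' (f ⟨x, hg⟩) := by
    have h5 := hq'.2
    rw [← ha2, Homeomorph.symm_apply_apply] at h5
    exact h5
  exact (lemB P hPmul hPG θ hθi hθm u hu hx'free hx''V hq'.1 heq).symm

/-- for topologically free injective actions that are continuously orbit
equivalent via `(φ, a, b)`, `b(φ(x), a(x, g)) = g` and `a(φ⁻¹(y), b(y, h)) = h`. -/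
theorem stmt_11 {G H : Type*} [Group G] [Countable G] [Group H] [Countable H]
    [TopologicalSpace G] [DiscreteTopology G] [TopologicalSpace H] [DiscreteTopology H]
    {X Y : Type*} [TopologicalSpace X] [CompactSpace X] [T2Space X]
    [SecondCountableTopology X]
    [TopologicalSpace Y] [CompactSpace Y] [T2Space Y] [SecondCountableTopology Y]
    (P : Set G) (hP1 : (1 : G) ∈ P) (hPmul : ∀ a ∈ P, ∀ b ∈ P, a * b ∈ P)
    (hPG : ∀ g : G, ∃ a ∈ P, ∃ b ∈ P, g = a * b⁻¹)
    (S : Set H) (hS1 : (1 : H) ∈ S) (hSmul : ∀ a ∈ S, ∀ b ∈ S, a * b ∈ S)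
    (hSH : ∀ h : H, ∃ a ∈ S, ∃ b ∈ S, h = a * b⁻¹)
    (θ : G → X → X)
    (hθc : ∀ a ∈ P, Continuous (θ a))
    (hθi : ∀ a ∈ P, Function.Injective (θ a))
    (hθ1 : θ 1 = id)
    (hθm : ∀ a ∈ P, ∀ b ∈ P, ∀ x : X, θ a (θ b x) = θ (b * a) x)
    (hθopen : ∀ a ∈ P, IsOpen (Set.range (θ a)))
    (ρ : H → Y → Y)
    (hρc : ∀ s ∈ S, Continuous (ρ s))
    (hρi : ∀ s ∈ S, Function.Injective (ρ s))
    (hρ1 : ρ 1 = id)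
    (hρm : ∀ a ∈ S, ∀ b ∈ S, ∀ y : Y, ρ a (ρ b y) = ρ (b * a) y)
    (hρopen : ∀ s ∈ S, IsOpen (Set.range (ρ s)))
    (u : X → G → X)
    (hu : ∀ x : X, ∀ g ∈ Qset P θ x, ∀ a ∈ P, ∀ b ∈ P,
      g = a * b⁻¹ → θ a x = θ b (u x g))
    (v : Y → H → Y)
    (hv : ∀ y : Y, ∀ h ∈ Qset S ρ y, ∀ a ∈ S, ∀ b ∈ S,
      h = a * b⁻¹ → ρ a y = ρ b (v y h))
    (hfreeX : Dense {x : X | ∀ g ∈ Qset P θ x, g ≠ 1 → u x g ≠ x})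
    (hfreeY : Dense {y : Y | ∀ h ∈ Qset S ρ y, h ≠ 1 → v y h ≠ y})
    (φ : X ≃ₜ Y)
    (a : {q : X × G // q.2 ∈ Qset P θ q.1} → H)
    (b : {q : Y × H // q.2 ∈ Qset S ρ q.1} → G)
    (hacont : Continuous a) (hbcont : Continuous b)
    (ha : ∀ p : {q : X × G // q.2 ∈ Qset P θ q.1},
      a p ∈ Qset S ρ (φ p.1.1) ∧ φ (u p.1.1 p.1.2) = v (φ p.1.1) (a p))
    (hb : ∀ q : {q : Y × H // q.2 ∈ Qset S ρ q.1},
      b q ∈ Qset P θ (φ.symm q.1.1) ∧ φ.symm (v q.1.1 q.1.2) = u (φ.symm q.1.1) (b q)) :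
    (∀ p : {q : X × G // q.2 ∈ Qset P θ q.1},
      b ⟨(φ p.1.1, a p), (ha p).1⟩ = p.1.2) ∧
    (∀ q : {q : Y × H // q.2 ∈ Qset S ρ q.1},
      a ⟨(φ.symm q.1.1, b q), (hb q).1⟩ = q.1.2) := by
  constructor
  · exact half P hPmul hPG S θ hθc hθi hθm hθopen ρ u hu v hfreeX φ a b hacont hbcont ha hb
  · exact half S hSmul hSH P ρ hρc hρi hρm hρopen θ v hv u hfreeY φ.symm b a hbcont hacont hb ha
end

section
/- Suppose both actions θ and ρ are topologically free and are continuously orbit equivalent via φ, a, b. Then the map Λ : X ⋊ P → Y ⋊ S, Λ(x, g) = (φ(x), a(x, g)), is a homeomorphism with inverse (y, h) ↦ (φ⁻¹(y), b(y, h)); it maps the unit space onto the unit space (a(x, e) = e for all x ∈ X); and it is multiplicative: whenever (x, g) ∈ X ⋊ P and (u(x, g), h) ∈ X ⋊ P, the pair Λ(x, g), Λ(u(x, g), h) is composable in Y ⋊ S (i.e., φ(u(x, g)) = u(φ(x), a(x, g))) and Λ(x, gh) = (φ(x), a(x, g) · a(u(x, g), h)). In other words, X ⋊ P and Y ⋊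 S are isomorphic as étale topological groupoids. -/
set_option linter.unusedSectionVars false
set_option linter.unusedVariables false

section Aux

variable {G X : Type*} [Group G] [TopologicalSpace X] [CompactSpace X] [T2Space X]
variable {P : Set G} {θ : G → X → X} {u : X → G → X}

theorem aux_q_one (hP1 : (1 : G) ∈ P) (x : X) : (1 : G) ∈ Qset P θ x :=
  ⟨1, hP1, 1, hP1, x, by group, rfl⟩

theorem aux_u_unique (hθi : ∀ c ∈ P, Function.Injective (θ c))
    (hu : ∀ x : X, ∀ g ∈ Qset P θ x, ∀ c ∈ P, ∀ d ∈ P, g = c * d⁻¹ → θ c x = θ d (u x g))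
    {x : X} {g : G} (hg : g ∈ Qset P θ x) {c d : G} (hc : c ∈ P) (hd : d ∈ P)
    {y : X} (hrep : g = c * d⁻¹) (heq : θ c x = θ d y) : u x g = y :=
  hθi d hd ((hu x g hg c hc d hd hrep).symm.trans heq)

theorem aux_u_one (hP1 : (1 : G) ∈ P) (hθ1 : θ 1 = id)
    (hθi : ∀ c ∈ P, Function.Injective (θ c))
    (hu : ∀ x : X, ∀ g ∈ Qset P θ x, ∀ c ∈ P, ∀ d ∈ P, g = c * d⁻¹ → θ c x = θ d (u x g))
    (x : X) : u x 1 = x :=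
  aux_u_unique hθi hu (aux_q_one hP1 x) hP1 hP1 (by group) rfl

theorem aux_q_inv (hθi : ∀ c ∈ P, Function.Injective (θ c))
    (hu : ∀ x : X, ∀ g ∈ Qset P θ x, ∀ c ∈ P, ∀ d ∈ P, g = c * d⁻¹ → θ c x = θ d (u x g))
    {x : X} {g : G} (hg : g ∈ Qset P θ x) :
    g⁻¹ ∈ Qset P θ (u x g) ∧ u (u x g) g⁻¹ = x := by
  obtain ⟨c, hc, d, hd, y, hrep, heq⟩ := hg
  have h1 : θ c x = θ d (u x g) := hu x g ⟨c, hc, d, hd, y, hrep, heq⟩ c hc d hd hrep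
  have hrep' : g⁻¹ = d * c⁻¹ := by rw [hrep]; group
  have hmem : g⁻¹ ∈ Qset P θ (u x g) := ⟨d, hd, c, hc, x, hrep', h1.symm⟩
  exact ⟨hmem, aux_u_unique hθi hu hmem hd hc hrep' h1.symm⟩

theorem aux_q_comp (hPmul : ∀ c ∈ P, ∀ d ∈ P, c * d ∈ P)
    (hPG : ∀ g : G, ∃ c ∈ P, ∃ d ∈ P, g = c * d⁻¹)
    (hθi : ∀ c ∈ P, Function.Injective (θ c))
    (hθm : ∀ c ∈ P, ∀ d ∈ P, ∀ x : X, θ c (θ d x) = θ (d * c) x)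
    (hu : ∀ x : X, ∀ g ∈ Qset P θ x, ∀ c ∈ P, ∀ d ∈ P, g = c * d⁻¹ → θ c x = θ d (u x g))
    {x : X} {g h : G} (hg : g ∈ Qset P θ x) (hh : h ∈ Qset P θ (u x g)) :
    g * h ∈ Qset P θ x ∧ u x (g * h) = u (u x g) h := by
  obtain ⟨a1, ha1, b1, hb1, y1, hrep1, heq1⟩ := hg
  obtain ⟨c1, hc1, d1, hd1, y2, hrep2, heq2⟩ := hh
  have H1 : θ a1 x = θ b1 (u x g) :=
    hu x g ⟨a1, ha1, b1, hb1, y1, hrep1, heq1⟩ a1 ha1 b1 hb1 hrep1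
  have H2 : θ c1 (u x g) = θ d1 (u (u x g) h) :=
    hu _ h ⟨c1, hc1, d1, hd1, y2, hrep2, heq2⟩ c1 hc1 d1 hd1 hrep2
  obtain ⟨p, hp, q, hq, hpq⟩ := hPG (b1⁻¹ * c1)
  have hbc : b1 * p = c1 * q := by
    have h' : b1 * (b1⁻¹ * c1) * q = b1 * (p * q⁻¹) * q := by rw [hpq]
    calc b1 * p = b1 * (p * q⁻¹) * q := by group
    _ = b1 * (b1⁻¹ * c1) * q := h'.symm
    _ = c1 * q := by group
  have key : θ (a1 * p) x = θ (d1 * q) (u (u x g) h) := by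
    calc θ (a1 * p) x = θ p (θ a1 x) := (hθm p hp a1 ha1 x).symm
    _ = θ p (θ b1 (u x g)) := by rw [H1]
    _ = θ (b1 * p) (u x g) := hθm p hp b1 hb1 _
    _ = θ (c1 * q) (u x g) := by rw [hbc]
    _ = θ q (θ c1 (u x g)) := (hθm q hq c1 hc1 _).symm
    _ = θ q (θ d1 (u (u x g) h)) := by rw [H2]
    _ = θ (d1 * q) (u (u x g) h) := hθm q hq d1 hd1 _
  have hrep3 : g * h = (a1 * p) * (d1 * q)⁻¹ := by
    rw [hrep1, hrep2,
      show a1 * b1⁻¹ * (c1 * d1⁻¹) = a1 * (b1⁻¹ * c1) * d1⁻¹ by group, hpq]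
    group
  have hmem : g * h ∈ Qset P θ x :=
    ⟨a1 * p, hPmul a1 ha1 p hp, d1 * q, hPmul d1 hd1 q hq, u (u x g) h, hrep3, key⟩
  exact ⟨hmem, aux_u_unique hθi hu hmem (hPmul a1 ha1 p hp) (hPmul d1 hd1 q hq) hrep3 key⟩

theorem aux_free_rigid (hPmul : ∀ c ∈ P, ∀ d ∈ P, c * d ∈ P)
    (hPG : ∀ g : G, ∃ c ∈ P, ∃ d ∈ P, g = c * d⁻¹)
    (hθi : ∀ c ∈ P, Function.Injective (θ c))
    (hθm : ∀ c ∈ P, ∀ d ∈ P, ∀ x : X, θ c (θ d x) = θ (d * c) x)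
    (hu : ∀ x : X, ∀ g ∈ Qset P θ x, ∀ c ∈ P, ∀ d ∈ P, g = c * d⁻¹ → θ c x = θ d (u x g))
    (hfree : Dense {x : X | ∀ g ∈ Qset P θ x, g ≠ 1 → u x g ≠ x})
    {U : Set X} (hU : IsOpen U) (hUne : U.Nonempty) {g g' : G}
    (hgg : ∀ x ∈ U, ∃ (_ : g ∈ Qset P θ x) (_ : g' ∈ Qset P θ x), u x g = u x g') :
    g = g' := by
  obtain ⟨x0, hx0free, hx0U⟩ := hfree.exists_mem_open hU hUne
  obtain ⟨hg, hg', huu⟩ := hgg x0 hx0U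
  have hi := aux_q_inv hθi hu hg'
  have hmem : g'⁻¹ ∈ Qset P θ (u x0 g) := by rw [huu]; exact hi.1
  have hc := aux_q_comp hPmul hPG hθi hθm hu hg hmem
  have hfix : u x0 (g * g'⁻¹) = x0 := by rw [hc.2, huu, hi.2]
  by_contra hne
  exact hx0free _ hc.1 (fun hone => hne (mul_inv_eq_one.mp hone)) hfix

theorem aux_dom_open (hθc : ∀ c ∈ P, Continuous (θ c))
    (hθi : ∀ c ∈ P, Function.Injective (θ c))
    (hθopen : ∀ c ∈ P, IsOpen (Set.range (θ c)))
    (hu : ∀ x : X, ∀ g ∈ Qset P θ x, ∀ c ∈ P, ∀ d ∈ P, g = c * d⁻¹ → θ c x = θ d (u x g))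
    {x : X} {g : G} (hg : g ∈ Qset P θ x) :
    ∃ U : Set X, IsOpen U ∧ x ∈ U ∧ (∀ x' ∈ U, g ∈ Qset P θ x') ∧
      ContinuousOn (fun x' => u x' g) U := by
  obtain ⟨c, hc, d, hd, y, hrep, heq⟩ := hg
  have hmem : ∀ x' ∈ θ c ⁻¹' Set.range (θ d), g ∈ Qset P θ x' := by
    rintro x' ⟨y', hy'⟩
    exact ⟨c, hc, d, hd, y', hrep, hy'.symm⟩
  refine ⟨θ c ⁻¹' Set.range (θ d), (hθopen d hd).preimage (hθc c hc), ⟨y, heq.symm⟩,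
    hmem, ?_⟩
  have hemb := (hθc d hd).isClosedEmbedding (hθi d hd)
  rw [hemb.isInducing.continuousOn_iff]
  refine ((hθc c hc).continuousOn).congr ?_
  intro x' hx'
  exact (hu x' g (hmem x' hx') c hc d hd hrep).symm

theorem aux_locconst [TopologicalSpace G] [DiscreteTopology G]
    {H' : Type*} [TopologicalSpace H'] [DiscreteTopology H']
    (f : {q : X × G // q.2 ∈ Qset P θ q.1} → H') (hf : Continuous f)
    {x : X} {g : G} (hx : g ∈ Qset P θ x) :
    ∃ W : Set X, IsOpen W ∧ x ∈ W ∧ ∀ x' ∈ W, ∀ (hx' : g ∈ Qset P θ x'),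
      f ⟨(x', g), hx'⟩ = f ⟨(x, g), hx⟩ := by
  set ι : {x' : X // g ∈ Qset P θ x'} → {q : X × G // q.2 ∈ Qset P θ q.1} :=
    fun x' => ⟨(x'.1, g), x'.2⟩ with hι
  have hιc : Continuous ι :=
    Continuous.subtype_mk (continuous_subtype_val.prodMk continuous_const) _
  have hopen : IsOpen (ι ⁻¹' (f ⁻¹' {f ⟨(x, g), hx⟩})) :=
    ((isOpen_discrete _).preimage hf).preimage hιc
  obtain ⟨W, hW, hWeq⟩ := isOpen_induced_iff.mp hopen
  have hxW : x ∈ W := by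
    have : (⟨x, hx⟩ : {x' : X // g ∈ Qset P θ x'}) ∈ Subtype.val ⁻¹' W := by
      rw [hWeq]; exact rfl
    exact this
  refine ⟨W, hW, hxW, ?_⟩
  intro x' hx'W hx'
  have : (⟨x', hx'⟩ : {x' : X // g ∈ Qset P θ x'}) ∈ ι ⁻¹' (f ⁻¹' {f ⟨(x, g), hx⟩}) := by
    rw [← hWeq]; exact hx'W
  exact this

end Aux

theorem aux_inverse {G H X Y : Type*} [Group G] [Group H]
    [TopologicalSpace G] [DiscreteTopology G] [TopologicalSpace H] [DiscreteTopology H]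
    [TopologicalSpace X] [CompactSpace X] [T2Space X] [TopologicalSpace Y]
    {P : Set G} (hPmul : ∀ c ∈ P, ∀ d ∈ P, c * d ∈ P)
    (hPG : ∀ g : G, ∃ c ∈ P, ∃ d ∈ P, g = c * d⁻¹)
    {S : Set H}
    {θ : G → X → X} (hθc : ∀ c ∈ P, Continuous (θ c))
    (hθi : ∀ c ∈ P, Function.Injective (θ c))
    (hθm : ∀ c ∈ P, ∀ d ∈ P, ∀ x : X, θ c (θ d x) = θ (d * c) x)
    (hθopen : ∀ c ∈ P, IsOpen (Set.range (θ c)))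
    {ρ : H → Y → Y}
    {u : X → G → X}
    (hu : ∀ x : X, ∀ g ∈ Qset P θ x, ∀ c ∈ P, ∀ d ∈ P, g = c * d⁻¹ → θ c x = θ d (u x g))
    {v : Y → H → Y}
    (hfreeX : Dense {x : X | ∀ g ∈ Qset P θ x, g ≠ 1 → u x g ≠ x})
    (φ : X ≃ₜ Y)
    (a : {q : X × G // q.2 ∈ Qset P θ q.1} → H)
    (b : {q : Y × H // q.2 ∈ Qset S ρ q.1} → G)
    (hacont : Continuous a) (hbcont : Continuous b)
    (ha : ∀ p : {q : X × G // q.2 ∈ Qset P θ q.1},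
      a p ∈ Qset S ρ (φ p.1.1) ∧ φ (u p.1.1 p.1.2) = v (φ p.1.1) (a p))
    (hb : ∀ q : {q : Y × H // q.2 ∈ Qset S ρ q.1},
      b q ∈ Qset P θ (φ.symm q.1.1) ∧ φ.symm (v q.1.1 q.1.2) = u (φ.symm q.1.1) (b q)) :
    ∀ p : {q : X × G // q.2 ∈ Qset P θ q.1}, b ⟨(φ p.1.1, a p), (ha p).1⟩ = p.1.2 := by
  rintro ⟨⟨x, g⟩, hg⟩
  -- the continuous map p ↦ b(Λ p)
  set Λf : {q : X × G // q.2 ∈ Qset P θ q.1} → {q : Y × H // q.2 ∈ Qset S ρ q.1} :=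
    fun p => ⟨(φ p.1.1, a p), (ha p).1⟩ with hΛf
  have hΛfc : Continuous Λf := by
    apply Continuous.subtype_mk
    exact (φ.continuous.comp (continuous_fst.comp continuous_subtype_val)).prodMk hacont
  set f2 : {q : X × G // q.2 ∈ Qset P θ q.1} → G := fun p => b (Λf p) with hf2
  have hf2c : Continuous f2 := hbcont.comp hΛfc
  obtain ⟨U0, hU0o, hxU0, hU0dom, _⟩ := aux_dom_open hθc hθi hθopen hu hg
  obtain ⟨U2, hU2o, hxU2, hU2⟩ := aux_locconst f2 hf2c hg
  -- on U0 ∩ U2, u x' g = u x' (f2 ⟨(x,g),hg⟩) for every x'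
  have main : ∀ x' ∈ U0 ∩ U2,
      ∃ (_ : g ∈ Qset P θ x') (_ : f2 ⟨(x, g), hg⟩ ∈ Qset P θ x'),
        u x' g = u x' (f2 ⟨(x, g), hg⟩) := by
    rintro x' ⟨hx'U0, hx'U2⟩
    have hgx' : g ∈ Qset P θ x' := hU0dom x' hx'U0
    have hval : f2 ⟨(x', g), hgx'⟩ = f2 ⟨(x, g), hg⟩ := hU2 x' hx'U2 hgx'
    have hbmem : f2 ⟨(x', g), hgx'⟩ ∈ Qset P θ x' := by
      have h0 := (hb (Λf ⟨(x', g), hgx'⟩)).1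
      rwa [show ((Λf ⟨(x', g), hgx'⟩ : { q : Y × H // q.2 ∈ Qset S ρ q.1 }) : Y × H).1 = φ x'
        from rfl, φ.symm_apply_apply] at h0
    have h1 := (hb (Λf ⟨(x', g), hgx'⟩)).2
    rw [show ((Λf ⟨(x', g), hgx'⟩ : { q : Y × H // q.2 ∈ Qset S ρ q.1 }) : Y × H).1 = φ x'
      from rfl, φ.symm_apply_apply] at h1
    have haeq := (ha ⟨(x', g), hgx'⟩).2
    have hueq : u x' g = u x' (f2 ⟨(x', g), hgx'⟩) := by
      have h2 := congrArg φ.symm haeq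
      rw [φ.symm_apply_apply] at h2
      rw [h2]
      exact h1
    rw [hval] at hbmem hueq
    exact ⟨hgx', hbmem, hueq⟩
  have := aux_free_rigid hPmul hPG hθi hθm hu hfreeX (hU0o.inter hU2o)
    ⟨x, hxU0, hxU2⟩ main
  exact this.symm


/-- for topologically free injective actions that are continuously orbit
equivalent via `(φ, a, b)`, the map `Λ(x, g) = (φ(x), a(x, g))` is a homeomorphism
`X ⋊ P ≃ₜ Y ⋊ S` with inverse `(y, h) ↦ (φ⁻¹(y), b(y, h))`, mapping the unit space onto
the unit space (`a(x, e) = e`) and multiplicative on composable pairs; i.e. `X ⋊ P` and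
`Y ⋊ S` are isomorphic as étale topological groupoids. -/
theorem stmt_12 {G H : Type*} [Group G] [Countable G] [Group H] [Countable H]
    [TopologicalSpace G] [DiscreteTopology G] [TopologicalSpace H] [DiscreteTopology H]
    {X Y : Type*} [TopologicalSpace X] [CompactSpace X] [T2Space X]
    [SecondCountableTopology X]
    [TopologicalSpace Y] [CompactSpace Y] [T2Space Y] [SecondCountableTopology Y]
    (P : Set G) (hP1 : (1 : G) ∈ P) (hPmul : ∀ a ∈ P, ∀ b ∈ P, a * b ∈ P)
    (hPG : ∀ g : G, ∃ a ∈ P, ∃ b ∈ P, g = a * b⁻¹)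
    (S : Set H) (hS1 : (1 : H) ∈ S) (hSmul : ∀ a ∈ S, ∀ b ∈ S, a * b ∈ S)
    (hSH : ∀ h : H, ∃ a ∈ S, ∃ b ∈ S, h = a * b⁻¹)
    (θ : G → X → X)
    (hθc : ∀ a ∈ P, Continuous (θ a))
    (hθi : ∀ a ∈ P, Function.Injective (θ a))
    (hθ1 : θ 1 = id)
    (hθm : ∀ a ∈ P, ∀ b ∈ P, ∀ x : X, θ a (θ b x) = θ (b * a) x)
    (hθopen : ∀ a ∈ P, IsOpen (Set.range (θ a)))
    (ρ : H → Y → Y)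
    (hρc : ∀ s ∈ S, Continuous (ρ s))
    (hρi : ∀ s ∈ S, Function.Injective (ρ s))
    (hρ1 : ρ 1 = id)
    (hρm : ∀ a ∈ S, ∀ b ∈ S, ∀ y : Y, ρ a (ρ b y) = ρ (b * a) y)
    (hρopen : ∀ s ∈ S, IsOpen (Set.range (ρ s)))
    (u : X → G → X)
    (hu : ∀ x : X, ∀ g ∈ Qset P θ x, ∀ a ∈ P, ∀ b ∈ P,
      g = a * b⁻¹ → θ a x = θ b (u x g))
    (v : Y → H → Y)
    (hv : ∀ y : Y, ∀ h ∈ Qset S ρ y, ∀ a ∈ S, ∀ b ∈ S,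
      h = a * b⁻¹ → ρ a y = ρ b (v y h))
    (hfreeX : Dense {x : X | ∀ g ∈ Qset P θ x, g ≠ 1 → u x g ≠ x})
    (hfreeY : Dense {y : Y | ∀ h ∈ Qset S ρ y, h ≠ 1 → v y h ≠ y})
    (φ : X ≃ₜ Y)
    (a : {q : X × G // q.2 ∈ Qset P θ q.1} → H)
    (b : {q : Y × H // q.2 ∈ Qset S ρ q.1} → G)
    (hacont : Continuous a) (hbcont : Continuous b)
    (ha : ∀ p : {q : X × G // q.2 ∈ Qset P θ q.1},
      a p ∈ Qset S ρ (φ p.1.1) ∧ φ (u p.1.1 p.1.2) = v (φ p.1.1) (a p))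
    (hb : ∀ q : {q : Y × H // q.2 ∈ Qset S ρ q.1},
      b q ∈ Qset P θ (φ.symm q.1.1) ∧ φ.symm (v q.1.1 q.1.2) = u (φ.symm q.1.1) (b q)) :
    (∃ Λ : {q : X × G // q.2 ∈ Qset P θ q.1} ≃ₜ {q : Y × H // q.2 ∈ Qset S ρ q.1},
      (∀ p : {q : X × G // q.2 ∈ Qset P θ q.1}, (Λ p : Y × H) = (φ p.1.1, a p)) ∧
      (∀ q : {q : Y × H // q.2 ∈ Qset S ρ q.1},
        (Λ.symm q : X × G) = (φ.symm q.1.1, b q))) ∧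
    (∀ (x : X) (hx : (1 : G) ∈ Qset P θ x), a ⟨(x, 1), hx⟩ = 1) ∧
    (∀ (x : X) (g h : G) (h1 : g ∈ Qset P θ x) (h2 : h ∈ Qset P θ (u x g))
      (h3 : g * h ∈ Qset P θ x),
      φ (u x g) = v (φ x) (a ⟨(x, g), h1⟩) ∧
      a ⟨(x, g * h), h3⟩ = a ⟨(x, g), h1⟩ * a ⟨(u x g, h), h2⟩) := by
  have key_ba : ∀ p : {q : X × G // q.2 ∈ Qset P θ q.1},
      b ⟨(φ p.1.1, a p), (ha p).1⟩ = p.1.2 :=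
    aux_inverse hPmul hPG hθc hθi hθm hθopen hu hfreeX φ a b hacont hbcont ha hb
  have ha' : ∀ q : {q : X × G // q.2 ∈ Qset P θ q.1},
      a q ∈ Qset S ρ (φ.symm.symm q.1.1) ∧
        φ.symm.symm (u q.1.1 q.1.2) = v (φ.symm.symm q.1.1) (a q) := by
    intro q; simpa only [Homeomorph.symm_symm] using ha q
  have key_ab : ∀ q : {q : Y × H // q.2 ∈ Qset S ρ q.1},
      a ⟨(φ.symm q.1.1, b q), (hb q).1⟩ = q.1.2 :=
    aux_inverse hSmul hSH hρc hρi hρm hρopen hv hfreeY φ.symm b a hbcont hacont hb ha'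
  refine ⟨?_, ?_, ?_⟩
  · -- the homeomorphism
    set Λf : {q : X × G // q.2 ∈ Qset P θ q.1} → {q : Y × H // q.2 ∈ Qset S ρ q.1} :=
      fun p => ⟨(φ p.1.1, a p), (ha p).1⟩ with hΛfdef
    set Λg : {q : Y × H // q.2 ∈ Qset S ρ q.1} → {q : X × G // q.2 ∈ Qset P θ q.1} :=
      fun q => ⟨(φ.symm q.1.1, b q), (hb q).1⟩ with hΛgdef
    have hΛfc : Continuous Λf :=
      Continuous.subtype_mk
        ((φ.continuous.comp (continuous_fst.comp continuous_subtype_val)).prodMk hacont) _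
    have hΛgc : Continuous Λg :=
      Continuous.subtype_mk
        ((φ.symm.continuous.comp (continuous_fst.comp continuous_subtype_val)).prodMk
          hbcont) _
    have hleft : Function.LeftInverse Λg Λf := by
      intro p
      apply Subtype.ext
      apply Prod.ext
      · exact φ.symm_apply_apply _
      · exact key_ba p
    have hright : Function.RightInverse Λg Λf := by
      intro q
      apply Subtype.ext
      apply Prod.ext
      · exact φ.apply_symm_apply _
      · exact key_ab q
    exact ⟨⟨⟨Λf, Λg, hleft, hright⟩, hΛfc, hΛgc⟩, fun p => rfl, fun q => rfl⟩
  · -- unit space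
    intro x hx
    obtain ⟨W, hWo, hxW, hW⟩ := aux_locconst a hacont hx
    have main : ∀ y' ∈ φ '' W,
        ∃ (_ : a ⟨(x, 1), hx⟩ ∈ Qset S ρ y') (_ : (1 : H) ∈ Qset S ρ y'),
          v y' (a ⟨(x, 1), hx⟩) = v y' 1 := by
      rintro y' ⟨x', hx'W, rfl⟩
      have hx' : (1 : G) ∈ Qset P θ x' := aux_q_one hP1 x'
      have hval : a ⟨(x', 1), hx'⟩ = a ⟨(x, 1), hx⟩ := hW x' hx'W hx'
      have hmem := (ha ⟨(x', 1), hx'⟩).1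
      have heq := (ha ⟨(x', 1), hx'⟩).2
      rw [hval] at hmem heq
      rw [show ((⟨(x', 1), hx'⟩ : {q : X × G // q.2 ∈ Qset P θ q.1}) : X × G).1 = x'
        from rfl, show ((⟨(x', 1), hx'⟩ : {q : X × G // q.2 ∈ Qset P θ q.1}) : X × G).2 = 1
        from rfl, aux_u_one hP1 hθ1 hθi hu x'] at heq
      refine ⟨hmem, aux_q_one hS1 (φ x'), ?_⟩
      rw [← heq, aux_u_one hS1 hρ1 hρi hv (φ x')]
    exact (aux_free_rigid hSmul hSH hρi hρm hv hfreeY (φ.isOpen_image.mpr hWo)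
      ⟨φ x, x, hxW, rfl⟩ main)
  · -- multiplicativity
    intro x g h h1m h2m h3m
    refine ⟨(ha ⟨(x, g), h1m⟩).2, ?_⟩
    obtain ⟨Ua, hUao, hxUa, hUa⟩ := aux_locconst a hacont h1m
    obtain ⟨Ub, hUbo, hzUb, hUb⟩ := aux_locconst a hacont h2m
    obtain ⟨Uc, hUco, hxUc, hUc⟩ := aux_locconst a hacont h3m
    obtain ⟨Dg, hDgo, hxDg, hDgdom, hDgcont⟩ := aux_dom_open hθc hθi hθopen hu h1m
    obtain ⟨Dh, hDho, hzDh, hDhdom, _⟩ := aux_dom_open hθc hθi hθopen hu h2m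
    set U : Set X := (Dg ∩ (fun x' => u x' g) ⁻¹' (Ub ∩ Dh)) ∩ (Ua ∩ Uc) with hUdef
    have hUo : IsOpen U :=
      (hDgcont.isOpen_inter_preimage hDgo (hUbo.inter hDho)).inter (hUao.inter hUco)
    have hxU : x ∈ U := ⟨⟨hxDg, hzUb, hzDh⟩, hxUa, hxUc⟩
    have main : ∀ y' ∈ φ '' U,
        ∃ (_ : a ⟨(x, g * h), h3m⟩ ∈ Qset S ρ y')
          (_ : a ⟨(x, g), h1m⟩ * a ⟨(u x g, h), h2m⟩ ∈ Qset S ρ y'),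
          v y' (a ⟨(x, g * h), h3m⟩) = v y' (a ⟨(x, g), h1m⟩ * a ⟨(u x g, h), h2m⟩) := by
      rintro y' ⟨x', hx'U, rfl⟩
      obtain ⟨⟨hx'Dg, hz'Ub, hz'Dh⟩, hx'Ua, hx'Uc⟩ := hx'U
      have hgx' : g ∈ Qset P θ x' := hDgdom x' hx'Dg
      have hhz' : h ∈ Qset P θ (u x' g) := hDhdom _ hz'Dh
      obtain ⟨hghm, hueq⟩ := aux_q_comp hPmul hPG hθi hθm hu hgx' hhz'
      have hva : a ⟨(x', g), hgx'⟩ = a ⟨(x, g), h1m⟩ := hUa x' hx'Ua hgx'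
      have hvb : a ⟨(u x' g, h), hhz'⟩ = a ⟨(u x g, h), h2m⟩ := hUb _ hz'Ub hhz'
      have hvc : a ⟨(x', g * h), hghm⟩ = a ⟨(x, g * h), h3m⟩ := hUc x' hx'Uc hghm
      have A1 := (ha ⟨(x', g), hgx'⟩).1
      have E1 := (ha ⟨(x', g), hgx'⟩).2
      have A2 := (ha ⟨(u x' g, h), hhz'⟩).1
      have E2 := (ha ⟨(u x' g, h), hhz'⟩).2
      have A3 := (ha ⟨(x', g * h), hghm⟩).1
      have E3 := (ha ⟨(x', g * h), hghm⟩).2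
      rw [hva] at A1 E1
      rw [hvb] at A2 E2
      rw [hvc] at A3 E3
      have A2' : a ⟨(u x g, h), h2m⟩ ∈ Qset S ρ (v (φ x') (a ⟨(x, g), h1m⟩)) := by
        have E1' : φ (u x' g) = v (φ x') (a ⟨(x, g), h1m⟩) := E1
        rw [← E1']
        exact A2
      obtain ⟨hcompm, hcompe⟩ := aux_q_comp hSmul hSH hρi hρm hv A1 A2'
      refine ⟨A3, hcompm, ?_⟩
      have E3' : φ (u x' (g * h)) = v (φ x') (a ⟨(x, g * h), h3m⟩) := E3
      have E2' : φ (u (u x' g) h) = v (φ (u x' g)) (a ⟨(u x g, h), h2m⟩) := E2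
      have E1' : φ (u x' g) = v (φ x') (a ⟨(x, g), h1m⟩) := E1
      rw [← E3', hueq, E2', hcompe, E1']
    have := aux_free_rigid hSmul hSH hρi hρm hv hfreeY (φ.isOpen_image.mpr hUo)
      ⟨φ x, x, hxU, rfl⟩ main
    exact this
end

section
/- Suppose Λ : X ⋊ P → Y ⋊ S is an isomorphism of topological groupoids: a homeomorphism that maps the unit space X × {e} bijectively onto the unit space Y × {e} and is multiplicative in the sense that whenever (x, g) ∈ X ⋊ P and (u(x, g), h) ∈ X ⋊ P, writing Λ(x, g) = (y₁, k₁) and Λ(u(x, g), h) = (y₂, k₂), one has y₂ = u(y₁, k₁) and Λ(x, gh) = (y₁, k₁k₂). Then the actions θ and ρ are continuously orbit equivalent; explicitly, defining φ(x) by Λ(x, e) = (φ(x), e), a(x, g) as the second coordinate of Λ(x, g), and b(y, h) as the second coordinate of Λ⁻¹(y, h), the data (φ, a, b) implements a continuous orbit equivalence. (No topological freeness is assumed.) -/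
/-- if `Λ : X ⋊ P → Y ⋊ S` is an isomorphism of topological groupoids
(a homeomorphism mapping the unit space bijectively onto the unit space and
multiplicative on composable pairs), then the actions are continuously orbit equivalent,
with `φ` determined by `Λ(x, e) = (φ(x), e)`, `a(x, g)` the second coordinate of
`Λ(x, g)` and `b(y, h)` the second coordinate of `Λ⁻¹(y, h)`. (No topological freeness
is assumed.) -/
theorem stmt_13 {G H : Type*} [Group G] [Countable G] [Group H] [Countable H]
    [TopologicalSpace G] [DiscreteTopology G] [TopologicalSpace H] [DiscreteTopology H]
    {X Y : Type*} [TopologicalSpace X] [CompactSpace X] [T2Space X]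
    [SecondCountableTopology X]
    [TopologicalSpace Y] [CompactSpace Y] [T2Space Y] [SecondCountableTopology Y]
    (P : Set G) (hP1 : (1 : G) ∈ P) (hPmul : ∀ a ∈ P, ∀ b ∈ P, a * b ∈ P)
    (hPG : ∀ g : G, ∃ a ∈ P, ∃ b ∈ P, g = a * b⁻¹)
    (S : Set H) (hS1 : (1 : H) ∈ S) (hSmul : ∀ a ∈ S, ∀ b ∈ S, a * b ∈ S)
    (hSH : ∀ h : H, ∃ a ∈ S, ∃ b ∈ S, h = a * b⁻¹)
    (θ : G → X → X)
    (hθc : ∀ a ∈ P, Continuous (θ a))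
    (hθi : ∀ a ∈ P, Function.Injective (θ a))
    (hθ1 : θ 1 = id)
    (hθm : ∀ a ∈ P, ∀ b ∈ P, ∀ x : X, θ a (θ b x) = θ (b * a) x)
    (hθopen : ∀ a ∈ P, IsOpen (Set.range (θ a)))
    (ρ : H → Y → Y)
    (hρc : ∀ s ∈ S, Continuous (ρ s))
    (hρi : ∀ s ∈ S, Function.Injective (ρ s))
    (hρ1 : ρ 1 = id)
    (hρm : ∀ a ∈ S, ∀ b ∈ S, ∀ y : Y, ρ a (ρ b y) = ρ (b * a) y)
    (hρopen : ∀ s ∈ S, IsOpen (Set.range (ρ s)))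
    (u : X → G → X)
    (hu : ∀ x : X, ∀ g ∈ Qset P θ x, ∀ a ∈ P, ∀ b ∈ P,
      g = a * b⁻¹ → θ a x = θ b (u x g))
    (v : Y → H → Y)
    (hv : ∀ y : Y, ∀ h ∈ Qset S ρ y, ∀ a ∈ S, ∀ b ∈ S,
      h = a * b⁻¹ → ρ a y = ρ b (v y h))
    (Λ : {q : X × G // q.2 ∈ Qset P θ q.1} ≃ₜ {q : Y × H // q.2 ∈ Qset S ρ q.1})
    (hunit : ∀ p : {q : X × G // q.2 ∈ Qset P θ q.1},
      p.1.2 = 1 ↔ (Λ p : Y × H).2 = 1)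
    (hmul : ∀ (x : X) (g h : G) (h1 : g ∈ Qset P θ x) (h2 : h ∈ Qset P θ (u x g))
      (h3 : g * h ∈ Qset P θ x),
      (Λ ⟨(u x g, h), h2⟩ : Y × H).1
          = v (Λ ⟨(x, g), h1⟩ : Y × H).1 (Λ ⟨(x, g), h1⟩ : Y × H).2 ∧
      (Λ ⟨(x, g * h), h3⟩ : Y × H)
          = ((Λ ⟨(x, g), h1⟩ : Y × H).1,
             (Λ ⟨(x, g), h1⟩ : Y × H).2 * (Λ ⟨(u x g, h), h2⟩ : Y × H).2)) :
    ∃ (φ : X ≃ₜ Y) (a : {q : X × G // q.2 ∈ Qset P θ q.1} → H)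
      (b : {q : Y × H // q.2 ∈ Qset S ρ q.1} → G),
      Continuous a ∧ Continuous b ∧
      (∀ (x : X) (hx : (1 : G) ∈ Qset P θ x), (Λ ⟨(x, 1), hx⟩ : Y × H) = (φ x, 1)) ∧
      (∀ p : {q : X × G // q.2 ∈ Qset P θ q.1}, a p = (Λ p : Y × H).2) ∧
      (∀ q : {q : Y × H // q.2 ∈ Qset S ρ q.1}, b q = (Λ.symm q : X × G).2) ∧
      (∀ p : {q : X × G // q.2 ∈ Qset P θ q.1},
        a p ∈ Qset S ρ (φ p.1.1) ∧ φ (u p.1.1 p.1.2) = v (φ p.1.1) (a p)) ∧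
      (∀ q : {q : Y × H // q.2 ∈ Qset S ρ q.1},
        b q ∈ Qset P θ (φ.symm q.1.1) ∧ φ.symm (v q.1.1 q.1.2) = u (φ.symm q.1.1) (b q)) := by
  -- basic membership facts
  have mem1G : ∀ x : X, (1 : G) ∈ Qset P θ x := fun x =>
    ⟨1, hP1, 1, hP1, x, by simp, rfl⟩
  have mem1H : ∀ y : Y, (1 : H) ∈ Qset S ρ y := fun y =>
    ⟨1, hS1, 1, hS1, y, by simp, rfl⟩
  have ux1 : ∀ x : X, u x 1 = x := by
    intro x
    have := hu x 1 (mem1G x) 1 hP1 1 hP1 (by simp)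
    rw [hθ1] at this
    exact this.symm
  have vy1 : ∀ y : Y, v y 1 = y := by
    intro y
    have := hv y 1 (mem1H y) 1 hS1 1 hS1 (by simp)
    rw [hρ1] at this
    exact this.symm
  -- the map φ and its inverse
  set f : X → Y := fun x => (Λ ⟨(x, 1), mem1G x⟩ : Y × H).1 with hf
  set ψ : Y → X := fun y => (Λ.symm ⟨(y, 1), mem1H y⟩ : X × G).1 with hψ
  have hΛunit : ∀ (x : X) (hx : (1 : G) ∈ Qset P θ x),
      (Λ ⟨(x, 1), hx⟩ : Y × H) = (f x, 1) := by
    intro x hx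
    have h2 : (Λ ⟨(x, 1), hx⟩ : Y × H).2 = 1 := (hunit ⟨(x, 1), hx⟩).mp rfl
    have : (⟨(x, 1), hx⟩ : {q : X × G // q.2 ∈ Qset P θ q.1}) = ⟨(x, 1), mem1G x⟩ :=
      Subtype.ext rfl
    rw [this] at h2 ⊢
    exact Prod.ext rfl h2
  have hΛsymmunit : ∀ (y : Y) (hy : (1 : H) ∈ Qset S ρ y),
      (Λ.symm ⟨(y, 1), hy⟩ : X × G) = (ψ y, 1) := by
    intro y hy
    have h2 : (Λ.symm ⟨(y, 1), hy⟩ : X × G).2 = 1 := by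
      have := (hunit (Λ.symm ⟨(y, 1), hy⟩)).mpr
      rw [Λ.apply_symm_apply] at this
      exact this rfl
    have : (⟨(y, 1), hy⟩ : {q : Y × H // q.2 ∈ Qset S ρ q.1}) = ⟨(y, 1), mem1H y⟩ :=
      Subtype.ext rfl
    rw [this] at h2 ⊢
    exact Prod.ext rfl h2
  have hψf : ∀ x : X, ψ (f x) = x := by
    intro x
    have h1 : (Λ ⟨(x, 1), mem1G x⟩ : Y × H) = (f x, 1) := hΛunit x (mem1G x)
    have h2 : Λ ⟨(x, 1), mem1G x⟩ = ⟨(f x, 1), mem1H (f x)⟩ := Subtype.ext h1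
    have h3 : Λ.symm ⟨(f x, 1), mem1H (f x)⟩ = ⟨(x, 1), mem1G x⟩ := by
      rw [← h2, Λ.symm_apply_apply]
    show (Λ.symm ⟨(f x, 1), mem1H (f x)⟩ : X × G).1 = x
    rw [h3]
  have hfψ : ∀ y : Y, f (ψ y) = y := by
    intro y
    have h1 : (Λ.symm ⟨(y, 1), mem1H y⟩ : X × G) = (ψ y, 1) := hΛsymmunit y (mem1H y)
    have h2 : Λ.symm ⟨(y, 1), mem1H y⟩ = ⟨(ψ y, 1), mem1G (ψ y)⟩ := Subtype.ext h1
    have h3 : Λ ⟨(ψ y, 1), mem1G (ψ y)⟩ = ⟨(y, 1), mem1H y⟩ := by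
      rw [← h2, Λ.apply_symm_apply]
    show (Λ ⟨(ψ y, 1), mem1G (ψ y)⟩ : Y × H).1 = y
    rw [h3]
  have hfc : Continuous f := by
    apply Continuous.fst
    apply Continuous.subtype_val
    exact Λ.continuous.comp (Continuous.subtype_mk (continuous_id.prodMk continuous_const) _)
  have hψc : Continuous ψ := by
    apply Continuous.fst
    apply Continuous.subtype_val
    exact Λ.symm.continuous.comp
      (Continuous.subtype_mk (continuous_id.prodMk continuous_const) _)
  -- the key computation
  have key : ∀ p : {q : X × G // q.2 ∈ Qset P θ q.1},
      (Λ p : Y × H).1 = f p.1.1 ∧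
      f (u p.1.1 p.1.2) = v (f p.1.1) (Λ p : Y × H).2 := by
    rintro ⟨⟨x, g⟩, hg⟩
    have h2 : g ∈ Qset P θ (u x 1) := by rw [ux1 x]; exact hg
    have h3 : (1 : G) * g ∈ Qset P θ x := by rw [one_mul]; exact hg
    have e1 : (⟨(u x 1, g), h2⟩ : {q : X × G // q.2 ∈ Qset P θ q.1}) = ⟨(x, g), hg⟩ :=
      Subtype.ext (show ((u x 1, g) : X × G) = (x, g) by rw [ux1 x])
    have fst_eq : (Λ ⟨(x, g), hg⟩ : Y × H).1 = f x := by
      have := (hmul x 1 g (mem1G x) h2 h3).1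
      rw [e1, hΛunit x (mem1G x)] at this
      simpa [vy1] using this
    refine ⟨fst_eq, ?_⟩
    have h2' : (1 : G) ∈ Qset P θ (u x g) := mem1G _
    have := (hmul x g 1 hg h2' (by rw [mul_one]; exact hg)).1
    rw [hΛunit (u x g) h2', fst_eq] at this
    exact this
  -- assemble
  refine ⟨⟨⟨f, ψ, hψf, hfψ⟩, hfc, hψc⟩, fun p => (Λ p : Y × H).2,
    fun q => (Λ.symm q : X × G).2, ?_, ?_, ?_, ?_, ?_, ?_, ?_⟩
  · exact (continuous_snd.comp (continuous_subtype_val.comp Λ.continuous))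
  · exact (continuous_snd.comp (continuous_subtype_val.comp Λ.symm.continuous))
  · exact hΛunit
  · intro p; rfl
  · intro q; rfl
  · intro p
    refine ⟨?_, (key p).2⟩
    have := (Λ p).2
    rwa [(key p).1] at this
  · intro q
    obtain ⟨p, rfl⟩ : ∃ p, Λ p = q := ⟨Λ.symm q, Λ.apply_symm_apply q⟩
    constructor
    · show (Λ.symm (Λ p) : X × G).2 ∈ Qset P θ (ψ (Λ p : Y × H).1)
      rw [Λ.symm_apply_apply, (key p).1, hψf]
      exact p.2
    · show ψ (v (Λ p : Y × H).1 (Λ p : Y × H).2)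
          = u (ψ (Λ p : Y × H).1) (Λ.symm (Λ p) : X × G).2
      rw [Λ.symm_apply_apply, (key p).1, hψf, ← (key p).2, hψf]
end

section
/- For every x ∈ X and g ∈ G, one has g ∈ Q_x with respect to the action of P₁ if and only if g ∈ Q_x with respect to the action of P₂, and the corresponding points u(x, g) coincide; hence X ⋊ P₁ = X ⋊ P₂ as topological groupoids, and the actions P₁ ↷_θ X and P₂ ↷_θ X are continuously orbit equivalent. However, P₁ ↷_θ X and P₂ ↷_θ X are not conjugate: there is no homeomorphism φ : X → X and semigroup isomorphism α : P₁ → P₂ with φ ∘ θ_m = θ_{α(m)} ∘ φ for all m ∈ P₁. -/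
/-- The rational `ax + b` group: pairs `(a, b)` with `a, b ∈ ℚ`, `a > 0`, i.e. the
matrices `[[a, b], [0, 1]]`, with multiplication `(a, b)(c, d) = (ac, ad + b)`. -/
abbrev AxB : Type := {p : ℚ × ℚ // 0 < p.1}

instance : Group AxB where
  mul p q := ⟨(p.1.1 * q.1.1, p.1.1 * q.1.2 + p.1.2), mul_pos p.2 q.2⟩
  one := ⟨(1, 0), one_pos⟩
  inv p := ⟨(p.1.1⁻¹, -(p.1.2 * p.1.1⁻¹)), inv_pos.mpr p.2⟩
  mul_assoc p q r := by
    refine Subtype.ext (Prod.ext ?_ ?_)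
    · show p.1.1 * q.1.1 * r.1.1 = p.1.1 * (q.1.1 * r.1.1); ring
    · show p.1.1 * q.1.1 * r.1.2 + (p.1.1 * q.1.2 + p.1.2)
        = p.1.1 * (q.1.1 * r.1.2 + q.1.2) + p.1.2; ring
  one_mul p := by
    refine Subtype.ext (Prod.ext ?_ ?_)
    · show (1 : ℚ) * p.1.1 = p.1.1; ring
    · show (1 : ℚ) * p.1.2 + 0 = p.1.2; ring
  mul_one p := by
    refine Subtype.ext (Prod.ext ?_ ?_)
    · show p.1.1 * 1 = p.1.1; ring
    · show p.1.1 * 0 + p.1.2 = p.1.2; ring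
  inv_mul_cancel p := by
    refine Subtype.ext (Prod.ext ?_ ?_)
    · show p.1.1⁻¹ * p.1.1 = 1; exact inv_mul_cancel₀ (ne_of_gt p.2)
    · show p.1.1⁻¹ * p.1.2 + -(p.1.2 * p.1.1⁻¹) = 0; ring

instance : TopologicalSpace AxB := ⊥
instance : DiscreteTopology AxB := ⟨rfl⟩

/-- `P₁ = {(a, b) : a ≥ 1, b ≥ 0}`. -/
def Pone : Set AxB := {g | 1 ≤ g.1.1 ∧ 0 ≤ g.1.2}

/-- `P₂ = {(a, b) : a a positive integer, b ≥ 0}`. -/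
def Ptwo : Set AxB := {g | (∃ n : ℕ, g.1.1 = (n : ℚ)) ∧ 0 ≤ g.1.2}

/-- `X = [-∞, 0] × [0, 1]`, where `[-∞, 0]` is the one-point compactification of
`(-∞, 0]`, modelled as `{t : EReal // t ≤ 0}`. -/
abbrev XIcc : Type := {t : EReal // t ≤ 0} × (Set.Icc (0 : ℝ) 1)

/-- The action `θ_{(a,b)}(x, y) = ((x - b)/a, y/a)` (with the convention
`(-∞ - b)/a = -∞`).  For elements of `P₁` (or `P₂`) the clamping `min · 0` and
`projIcc` do nothing, so on `P₁` and `P₂` this is exactly the action of the paper. -/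
noncomputable def thetaAxB (g : AxB) (x : XIcc) : XIcc :=
  (⟨min ((((g.1.1 : ℝ)⁻¹ : ℝ) : EReal) * (x.1.1 - ((g.1.2 : ℝ) : EReal))) 0,
      min_le_right _ _⟩,
   Set.projIcc (0 : ℝ) 1 zero_le_one (x.2.1 / (g.1.1 : ℝ)))

lemma mul_fst' (p q : AxB) : (p*q).1.1 = p.1.1*q.1.1 := rfl
lemma mul_snd' (p q : AxB) : (p*q).1.2 = p.1.1*q.1.2 + p.1.2 := rfl
lemma one_fst' : (1:AxB).1.1 = 1 := rfl
lemma one_snd' : (1:AxB).1.2 = 0 := rfl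

lemma theta_fst (g : AxB) (x : XIcc) :
    (thetaAxB g x).1.1
      = min ((((g.1.1:ℝ)⁻¹:ℝ):EReal) * (x.1.1 - ((g.1.2:ℝ):EReal))) 0 := rfl
lemma theta_snd (g : AxB) (x : XIcc) :
    (thetaAxB g x).2 = Set.projIcc (0:ℝ) 1 zero_le_one (x.2.1/(g.1.1:ℝ)) := rfl

lemma mul_sub_nonpos (c b : ℝ) (hc : 0 < c) (hb : 0 ≤ b) (t : EReal) (ht : t ≤ 0) :
    ((c:ℝ):EReal)*(t - (b:EReal)) ≤ 0 := by
  induction t using EReal.rec with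
  | bot =>
      have : ((⊥:EReal) - (b:EReal)) = ⊥ := rfl
      rw [this, EReal.coe_mul_bot_of_pos hc]
      exact bot_le
  | coe r =>
      have hr : r ≤ 0 := by exact_mod_cast ht
      have : ((r:EReal) - (b:EReal)) = ((r - b : ℝ) : EReal) := rfl
      rw [this, ← EReal.coe_mul]
      exact_mod_cast mul_nonpos_of_nonneg_of_nonpos hc.le (by linarith)
  | top => simp at ht

lemma key_ereal (a1 b1 a2 b2 : ℝ) (ha1 : 0 < a1) (ha2 : 0 < a2) (t : EReal) (ht : t ≤ 0) :
    ((a2⁻¹:ℝ):EReal) * (((a1⁻¹:ℝ):EReal)*(t - (b1:EReal)) - (b2:EReal))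
      = (((a1*a2)⁻¹:ℝ):EReal) * (t - ((a1*b2+b1 : ℝ):EReal)) := by
  induction t using EReal.rec with
  | bot =>
      have e1 : ((⊥:EReal) - (b1:EReal)) = ⊥ := rfl
      have e2 : ((⊥:EReal) - (b2:EReal)) = ⊥ := rfl
      have e3 : ((⊥:EReal) - ((a1*b2+b1:ℝ):EReal)) = ⊥ := rfl
      rw [e1, EReal.coe_mul_bot_of_pos (inv_pos.mpr ha1), e2,
        EReal.coe_mul_bot_of_pos (inv_pos.mpr ha2), e3,
        EReal.coe_mul_bot_of_pos (inv_pos.mpr (mul_pos ha1 ha2))]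
  | coe r =>
      norm_cast
      field_simp
      ring
  | top => simp at ht

lemma icc_div_mem (g : AxB) (hg : g ∈ Pone) (y : ℝ) (hy : y ∈ Set.Icc (0:ℝ) 1) :
    y / (g.1.1 : ℝ) ∈ Set.Icc (0:ℝ) 1 := by
  have ha : (1:ℝ) ≤ (g.1.1:ℝ) := by exact_mod_cast hg.1
  constructor
  · exact div_nonneg hy.1 (by linarith)
  · rw [div_le_one (by linarith)]
    exact hy.2.trans ha


lemma ereal_nonpos_cases (t : EReal) (ht : t ≤ 0) : t = ⊥ ∨ ∃ r : ℝ, r ≤ 0 ∧ t = (r:EReal) := by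
  induction t using EReal.rec with
  | bot => exact Or.inl rfl
  | coe r => exact Or.inr ⟨r, by exact_mod_cast ht, rfl⟩
  | top => simp at ht

lemma theta_comp (g h : AxB) (hg : g ∈ Pone) (hh : h ∈ Pone) (x : XIcc) :
    thetaAxB h (thetaAxB g x) = thetaAxB (g * h) x := by
  have hg1 : (0:ℝ) < (g.1.1:ℝ) := by exact_mod_cast g.2
  have hh1 : (0:ℝ) < (h.1.1:ℝ) := by exact_mod_cast h.2
  have hgb : (0:ℝ) ≤ (g.1.2:ℝ) := by exact_mod_cast hg.2
  have hhb : (0:ℝ) ≤ (h.1.2:ℝ) := by exact_mod_cast hh.2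
  have c1 : (((g*h).1.1:ℚ):ℝ) = (g.1.1:ℝ)*(h.1.1:ℝ) := by rw [mul_fst']; push_cast; ring
  have c2 : (((g*h).1.2:ℚ):ℝ) = (g.1.1:ℝ)*(h.1.2:ℝ)+(g.1.2:ℝ) := by
    rw [mul_snd']; push_cast; ring
  refine Prod.ext (Subtype.ext ?_) ?_
  · rw [theta_fst, theta_fst, theta_fst,
      min_eq_left (mul_sub_nonpos _ _ (inv_pos.mpr hg1) hgb _ x.1.2),
      key_ereal _ _ _ _ hg1 hh1 _ x.1.2, c1, c2]
  · rw [theta_snd, theta_snd, theta_snd]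
    have hproj : (↑(Set.projIcc (0:ℝ) 1 zero_le_one (x.2.1 / (g.1.1:ℝ))) : ℝ)
        = x.2.1 / (g.1.1:ℝ) := by
      rw [Set.projIcc_of_mem _ (icc_div_mem g hg _ x.2.2)]
    rw [hproj, div_div, c1]

lemma theta_inj (g : AxB) (hg : g ∈ Pone) : Function.Injective (thetaAxB g) := by
  have hg1 : (0:ℝ) < (g.1.1:ℝ) := by exact_mod_cast g.2
  have hgb : (0:ℝ) ≤ (g.1.2:ℝ) := by exact_mod_cast hg.2
  intro u v huv
  have h1 := congrArg (fun z : XIcc => z.1.1) huv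
  have h2 := congrArg (fun z : XIcc => (z.2 : ℝ)) huv
  simp only [theta_fst, theta_snd] at h1 h2
  rw [min_eq_left (mul_sub_nonpos _ _ (inv_pos.mpr hg1) hgb _ u.1.2),
    min_eq_left (mul_sub_nonpos _ _ (inv_pos.mpr hg1) hgb _ v.1.2)] at h1
  rw [Set.projIcc_of_mem _ (icc_div_mem g hg _ u.2.2),
    Set.projIcc_of_mem _ (icc_div_mem g hg _ v.2.2)] at h2
  have hne : (g.1.1:ℝ) ≠ 0 := ne_of_gt hg1
  have h2' : (u.2.1:ℝ) / (g.1.1:ℝ) = v.2.1 / (g.1.1:ℝ) := h2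
  have hsnd : u.2 = v.2 := by
    refine Subtype.ext ?_
    rw [div_eq_div_iff hne hne] at h2'
    exact mul_right_cancel₀ hne h2'
  have hfst : u.1 = v.1 := by
    refine Subtype.ext ?_
    have ebot : ((⊥:EReal) - ((g.1.2:ℝ):EReal)) = ⊥ := rfl
    have ecoe : ∀ s : ℝ, ((s:EReal) - ((g.1.2:ℝ):EReal)) = ((s - (g.1.2:ℝ) : ℝ):EReal) :=
      fun _ => rfl
    rcases ereal_nonpos_cases _ u.1.2 with hu | ⟨r, hr, hu⟩ <;>
      rcases ereal_nonpos_cases _ v.1.2 with hv | ⟨r', hr', hv⟩ <;>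
      rw [hu, hv] at h1 ⊢
    · exfalso
      rw [ebot, EReal.coe_mul_bot_of_pos (inv_pos.mpr hg1), ecoe, ← EReal.coe_mul] at h1
      exact (EReal.bot_ne_coe _) h1
    · exfalso
      rw [ebot, EReal.coe_mul_bot_of_pos (inv_pos.mpr hg1), ecoe, ← EReal.coe_mul] at h1
      exact (EReal.coe_ne_bot _) h1
    · rw [ecoe, ecoe, ← EReal.coe_mul, ← EReal.coe_mul] at h1
      have h1' : (g.1.1:ℝ)⁻¹ * (r - (g.1.2:ℝ)) = (g.1.1:ℝ)⁻¹ * (r' - (g.1.2:ℝ)) := by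
        exact_mod_cast h1
      have hne2 : (g.1.1:ℝ)⁻¹ ≠ 0 := ne_of_gt (inv_pos.mpr hg1)
      have := mul_left_cancel₀ hne2 h1'
      have : r = r' := by linarith
      exact_mod_cast this
  exact Prod.ext hfst hsnd

lemma Pone_mul {g h : AxB} (hg : g ∈ Pone) (hh : h ∈ Pone) : g * h ∈ Pone := by
  refine ⟨?_, ?_⟩
  · rw [mul_fst']
    calc (1:ℚ) = 1 * 1 := by ring
      _ ≤ g.1.1 * h.1.1 := by
          apply mul_le_mul hg.1 hh.1 (by norm_num) (le_trans (by norm_num) hg.1)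
  · rw [mul_snd']
    have h1 : (0:ℚ) ≤ g.1.1 := le_trans zero_le_one hg.1
    have h2 := mul_nonneg h1 hh.2
    linarith [hg.2]

lemma Ptwo_sub : Ptwo ⊆ Pone := by
  rintro g ⟨⟨n, hn⟩, hb⟩
  refine ⟨?_, hb⟩
  rw [hn]
  have : 0 < (n:ℚ) := hn ▸ g.2
  have hn1 : 1 ≤ n := by exact_mod_cast this
  exact_mod_cast hn1

lemma one_mem_Pone : (1:AxB) ∈ Pone := ⟨le_refl _, le_refl _⟩

lemma qone_to_qtwo (x : XIcc) (g : AxB) (hx : g ∈ Qset Pone thetaAxB x) :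
    g ∈ Qset Ptwo thetaAxB x := by
  obtain ⟨a, ha, b, hb, y, hgab, hth⟩ := hx
  set sn : ℕ := a.1.1.den * b.1.1.den with hsn
  have hsnpos : 0 < sn := Nat.mul_pos a.1.1.pos b.1.1.pos
  set p : AxB := ⟨((sn : ℚ), 0), by show (0:ℚ) < (sn:ℚ); exact_mod_cast hsnpos⟩ with hp
  have hpPone : p ∈ Pone := by
    refine ⟨?_, le_refl _⟩
    show (1:ℚ) ≤ (sn:ℚ)
    exact_mod_cast Nat.succ_le_of_lt hsnpos
  have hmulnat : ∀ c : AxB, 0 < c.1.1.num → ∃ n : ℕ, c.1.1 * (sn:ℚ) = (n:ℚ) → True := fun _ _ => ⟨0, fun _ => trivial⟩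
  have key : ∀ c : AxB, c.1.1.den ∣ sn → ∃ n : ℕ, c.1.1 * (sn:ℚ) = (n:ℚ) := by
    intro c hdvd
    obtain ⟨k, hk⟩ := hdvd
    have hnum : (0:ℤ) < c.1.1.num := Rat.num_pos.mpr c.2
    obtain ⟨n', hn'⟩ := Int.eq_ofNat_of_zero_le hnum.le
    have h1 : c.1.1 * (c.1.1.den : ℚ) = (c.1.1.num : ℚ) := by
      rw [Rat.mul_den_eq_num]
    refine ⟨n' * k, ?_⟩
    calc c.1.1 * (sn:ℚ) = c.1.1 * ((c.1.1.den : ℚ) * (k:ℚ)) := by rw [hk]; push_cast; ring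
      _ = (c.1.1 * (c.1.1.den : ℚ)) * (k:ℚ) := by ring
      _ = (c.1.1.num : ℚ) * (k:ℚ) := by rw [h1]
      _ = ((n' * k : ℕ) : ℚ) := by rw [hn']; push_cast; ring
  have hap : a * p ∈ Ptwo := by
    refine ⟨?_, ?_⟩
    · rw [mul_fst']
      exact key a ⟨b.1.1.den, rfl⟩
    · rw [mul_snd']
      show 0 ≤ a.1.1 * (0:ℚ) + a.1.2
      simpa using ha.2
  have hbp : b * p ∈ Ptwo := by
    refine ⟨?_, ?_⟩
    · rw [mul_fst']
      exact key b ⟨a.1.1.den, by rw [hsn]; ring⟩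
    · rw [mul_snd']
      show 0 ≤ b.1.1 * (0:ℚ) + b.1.2
      simpa using hb.2
  refine ⟨a * p, hap, b * p, hbp, y, ?_, ?_⟩
  · rw [hgab, mul_inv_rev]
    group
  · rw [← theta_comp a p ha hpPone, ← theta_comp b p hb hpPone, hth]

-- translations
def tr (c : ℚ) : AxB := ⟨(1, c), one_pos⟩

lemma tr_mem {c : ℚ} (hc : 0 ≤ c) : tr c ∈ Pone := ⟨le_refl _, hc⟩

lemma tr_mul (c d : ℚ) : tr c * tr d = tr (d + c) := by
  refine Subtype.ext (Prod.ext ?_ ?_)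
  · show (1:ℚ) * 1 = 1; ring
  · show (1:ℚ) * d + c = d + c; ring

lemma tr_pow (c : ℚ) (k : ℕ) : (tr c) ^ k = tr (k * c) := by
  induction k with
  | zero =>
      refine Subtype.ext (Prod.ext ?_ ?_)
      · show (1:ℚ) = 1; rfl
      · show (0:ℚ) = (0:ℕ) * c; simp
  | succ n ih =>
      rw [pow_succ, ih, tr_mul]
      congr 1
      push_cast
      ring

lemma pow_mem_Pone {m : AxB} (hm : m ∈ Pone) (k : ℕ) : m ^ k ∈ Pone := by
  induction k with
  | zero => simpa using one_mem_Pone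
  | succ n ih => rw [pow_succ]; exact Pone_mul ih hm

lemma pow_fst (m : AxB) (k : ℕ) : (m ^ k).1.1 = m.1.1 ^ k := by
  induction k with
  | zero => rw [pow_zero, pow_zero, one_fst']
  | succ n ih => rw [pow_succ, mul_fst', ih, pow_succ]

lemma nonconj : ¬ (∃ (φ : XIcc ≃ₜ XIcc) (α : AxB → AxB),
    Set.BijOn α Pone Ptwo ∧
    (∀ m ∈ Pone, ∀ n ∈ Pone, α (m * n) = α m * α n) ∧
    (∀ m ∈ Pone, ∀ x : XIcc, φ (thetaAxB m x) = thetaAxB (α m) (φ x))) := by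
  rintro ⟨φ, α, hbij, hmul, -⟩
  have hα1 : α 1 = 1 := by
    have h := hmul 1 one_mem_Pone 1 one_mem_Pone
    rw [one_mul] at h
    exact (left_eq_mul.mp h)
  have hαpow : ∀ (m : AxB), m ∈ Pone → ∀ k : ℕ, α (m ^ k) = (α m) ^ k := by
    intro m hm k
    induction k with
    | zero => simpa using hα1
    | succ n ih => rw [pow_succ, hmul _ (pow_mem_Pone hm n) _ hm, ih, pow_succ]
  have htrans : ∀ c : ℚ, 0 ≤ c → (α (tr c)).1.1 = 1 := by
    intro c hc
    obtain ⟨n₀, hn₀⟩ := (hbij.mapsTo (tr_mem hc)).1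
    have hn₀pos : 0 < n₀ := by
      have h := (α (tr c)).2
      rw [hn₀] at h
      exact_mod_cast h
    have hcdiv : 0 ≤ c / (n₀:ℚ) := div_nonneg hc (by positivity)
    obtain ⟨m, hm⟩ := (hbij.mapsTo (tr_mem hcdiv)).1
    have hpowtr : (tr (c / (n₀:ℚ))) ^ n₀ = tr c := by
      rw [tr_pow]
      congr 1
      field_simp
    have hkey := hαpow _ (tr_mem hcdiv) n₀
    rw [hpowtr] at hkey
    have hfst := congrArg (fun z : AxB => z.1.1) hkey
    simp only [pow_fst] at hfst
    rw [hn₀, hm] at hfst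
    have hnat : n₀ = m ^ n₀ := by exact_mod_cast hfst
    have hm1 : m = 1 := by
      by_contra hne
      rcases Nat.lt_or_ge m 2 with hlt | hge
      · interval_cases m
        · rw [Nat.zero_pow hn₀pos] at hnat; omega
        · exact hne rfl
      · have h1 : n₀ < 2 ^ n₀ := Nat.lt_two_pow_self
        have h2 : 2 ^ n₀ ≤ m ^ n₀ := Nat.pow_le_pow_left hge n₀
        omega
    rw [hm1] at hnat
    simp only [one_pow] at hnat
    rw [hn₀, hnat]
    norm_num
  set f : ℚ → ℚ := fun c => (α (tr c)).1.2 with hf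
  have hadd : ∀ c d : ℚ, 0 ≤ c → 0 ≤ d → f (d + c) = f d + f c := by
    intro c d hc hd
    have h := hmul (tr c) (tr_mem hc) (tr d) (tr_mem hd)
    rw [tr_mul] at h
    have hsnd := congrArg (fun z : AxB => z.1.2) h
    simp only [mul_snd'] at hsnd
    rw [htrans c hc] at hsnd
    simpa using hsnd
  have hf2 : f 2 = 2 * f 1 := by
    have h := hadd 1 1 (by norm_num) (by norm_num)
    norm_num at h
    linarith
  have hf3 : f 3 = 3 * f 1 := by
    have h := hadd 1 2 (by norm_num) (by norm_num)
    norm_num at h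
    linarith
  have htr0 : tr 0 = 1 := rfl
  have hf1 : f 1 ≠ 0 := by
    intro h0
    have heq : α (tr 1) = 1 := by
      refine Subtype.ext (Prod.ext ?_ ?_)
      · rw [htrans 1 (by norm_num)]; rfl
      · exact h0
    have h10 : tr 1 = tr 0 := by
      refine hbij.injOn (tr_mem (by norm_num)) (tr_mem (le_refl 0)) ?_
      rw [heq, htr0, hα1]
    have := congrArg (fun z : AxB => z.1.2) h10
    norm_num [tr] at this
  set m₀ : AxB := ⟨(3/2, 0), by norm_num⟩ with hm₀
  have hm₀Pone : m₀ ∈ Pone := ⟨by norm_num, le_refl _⟩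
  have hrel : m₀ * tr 2 = tr 3 * m₀ := by
    refine Subtype.ext (Prod.ext ?_ ?_)
    · show (3/2:ℚ) * 1 = 1 * (3/2); norm_num
    · show (3/2:ℚ) * 2 + 0 = 1 * 0 + 3; norm_num
  have hαrel := congrArg α hrel
  rw [hmul _ hm₀Pone _ (tr_mem (by norm_num)), hmul _ (tr_mem (by norm_num)) _ hm₀Pone] at hαrel
  have hsnd := congrArg (fun z : AxB => z.1.2) hαrel
  simp only [mul_snd'] at hsnd
  rw [htrans 3 (by norm_num)] at hsnd
  have hsnd' : (α m₀).1.1 * f 2 + (α m₀).1.2 = 1 * (α m₀).1.2 + f 3 := hsnd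
  rw [hf2, hf3] at hsnd'
  have hA : (α m₀).1.1 * 2 = 3 := by
    have h' : ((α m₀).1.1 * 2) * f 1 = 3 * f 1 := by ring_nf; ring_nf at hsnd'; linarith
    exact mul_right_cancel₀ hf1 h'
  obtain ⟨n, hn⟩ := (hbij.mapsTo hm₀Pone).1
  rw [hn] at hA
  have hA' : ((n * 2 : ℕ):ℚ) = ((3:ℕ):ℚ) := by push_cast; linarith
  have : (n * 2 : ℕ) = 3 := by exact_mod_cast hA'
  omega
/-- for the actions of `P₁` and `P₂` on `X = [-∞, 0] × [0, 1]`: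
`Q_x` is the same for both actions, with the same `u(x, g)`; hence the transformation
groupoids `X ⋊ P₁` and `X ⋊ P₂` coincide and the two actions are continuously orbit
equivalent.  However, they are not conjugate. -/
theorem stmt_14
    (u₁ u₂ : XIcc → AxB → XIcc)
    (hu₁ : ∀ x : XIcc, ∀ g ∈ Qset Pone thetaAxB x, ∀ a ∈ Pone, ∀ b ∈ Pone,
      g = a * b⁻¹ → thetaAxB a x = thetaAxB b (u₁ x g))
    (hu₂ : ∀ x : XIcc, ∀ g ∈ Qset Ptwo thetaAxB x, ∀ a ∈ Ptwo, ∀ b ∈ Ptwo,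
      g = a * b⁻¹ → thetaAxB a x = thetaAxB b (u₂ x g)) :
    (∀ (x : XIcc) (g : AxB), g ∈ Qset Pone thetaAxB x ↔ g ∈ Qset Ptwo thetaAxB x) ∧
    ({p : XIcc × AxB | p.2 ∈ Qset Pone thetaAxB p.1}
        = {p : XIcc × AxB | p.2 ∈ Qset Ptwo thetaAxB p.1}) ∧
    (∀ (x : XIcc) (g : AxB), g ∈ Qset Pone thetaAxB x → u₁ x g = u₂ x g) ∧
    (∃ (φ : XIcc ≃ₜ XIcc)
        (a : {q : XIcc × AxB // q.2 ∈ Qset Pone thetaAxB q.1} → AxB)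
        (b : {q : XIcc × AxB // q.2 ∈ Qset Ptwo thetaAxB q.1} → AxB),
      Continuous a ∧ Continuous b ∧
      (∀ p : {q : XIcc × AxB // q.2 ∈ Qset Pone thetaAxB q.1},
        a p ∈ Qset Ptwo thetaAxB (φ p.1.1) ∧
        φ (u₁ p.1.1 p.1.2) = u₂ (φ p.1.1) (a p)) ∧
      (∀ q : {q : XIcc × AxB // q.2 ∈ Qset Ptwo thetaAxB q.1},
        b q ∈ Qset Pone thetaAxB (φ.symm q.1.1) ∧
        φ.symm (u₂ q.1.1 q.1.2) = u₁ (φ.symm q.1.1) (b q))) ∧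
    ¬ (∃ (φ : XIcc ≃ₜ XIcc) (α : AxB → AxB),
        Set.BijOn α Pone Ptwo ∧
        (∀ m ∈ Pone, ∀ n ∈ Pone, α (m * n) = α m * α n) ∧
        (∀ m ∈ Pone, ∀ x : XIcc, φ (thetaAxB m x) = thetaAxB (α m) (φ x))) := by

  have part1 : ∀ (x : XIcc) (g : AxB),
      g ∈ Qset Pone thetaAxB x ↔ g ∈ Qset Ptwo thetaAxB x := by
    intro x g
    constructor
    · exact qone_to_qtwo x g
    · rintro ⟨a, ha, b, hb, y, hgab, hth⟩
      exact ⟨a, Ptwo_sub ha, b, Ptwo_sub hb, y, hgab, hth⟩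
  have part3 : ∀ (x : XIcc) (g : AxB), g ∈ Qset Pone thetaAxB x → u₁ x g = u₂ x g := by
    intro x g hx
    have hx2 := (part1 x g).mp hx
    obtain ⟨a, ha, b, hb, y, hgab, hth⟩ := hx2
    have e1 := hu₁ x g hx a (Ptwo_sub ha) b (Ptwo_sub hb) hgab
    have e2 := hu₂ x g ((part1 x g).mp hx) a ha b hb hgab
    exact theta_inj b (Ptwo_sub hb) (e1.symm.trans e2)
  refine ⟨part1, ?_, part3, ?_, nonconj⟩
  · ext ⟨x, g⟩
    exact part1 x g
  · refine ⟨Homeomorph.refl _, fun p => p.1.2, fun q => q.1.2,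
      continuous_snd.comp continuous_subtype_val,
      continuous_snd.comp continuous_subtype_val, ?_, ?_⟩
    · intro p
      refine ⟨(part1 p.1.1 p.1.2).mp p.2, ?_⟩
      simp only [Homeomorph.refl_apply, id]
      exact part3 p.1.1 p.1.2 p.2
    · intro q
      have hq1 : q.1.2 ∈ Qset Pone thetaAxB q.1.1 := (part1 q.1.1 q.1.2).mpr q.2
      refine ⟨?_, ?_⟩
      · simpa only [Homeomorph.refl_symm, Homeomorph.refl_apply, id] using hq1
      · simp only [Homeomorph.refl_symm, Homeomorph.refl_apply]
        exact (part3 q.1.1 q.1.2 hq1).symm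
end

section
/- For every a ∈ P, β_a(Ỹ) ⊆ Ỹ and β_a(Ỹ) = {ξ ∈ Ỹ : ξ(a) = 1}; in particular β_a(Ỹ) is an open subset of Ỹ. Consequently β restricts to a right injective action of P on the compact space Ỹ whose image sets β_a(Ỹ) are open in Ỹ. -/
attribute [local instance] Classical.propDecidable

/-- The right shift action of `G` on `{0, 1}^G` (modelled as `G → Bool`):
`β_g(ξ)(h) = ξ(h g⁻¹)`. -/
def shiftB {G : Type*} [Group G] (g : G) (ξ : G → Bool) : G → Bool :=
  fun h => ξ (h * g⁻¹)

/-- The characteristic function `χ_A : G → Bool` of a subset `A ⊆ G`. -/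
noncomputable def chiB {G : Type*} (A : Set G) : G → Bool :=
  fun k => if k ∈ A then true else false

/-- `Ỹ`: the closure in `{0, 1}^G` of `{χ_{S⁻¹h} : h ∈ S}`. -/
noncomputable def Ytil {G : Type*} [Group G] (S : Set G) : Set (G → Bool) :=
  closure {ξ : G → Bool | ∃ h ∈ S, ξ = chiB {k : G | ∃ s ∈ S, k = s⁻¹ * h}}

lemma chiB_eq_true_iff {G : Type*} (A : Set G) (k : G) : chiB A k = true ↔ k ∈ A := by
  by_cases h : k ∈ A <;> simp [chiB, h]

lemma shiftB_chiB {G : Type*} [Group G] (a : G) (A : Set G) :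
    shiftB a (chiB A) = chiB {k : G | k * a⁻¹ ∈ A} := rfl

/-- assume `P ⊆ S ⊆ G` and `S P ⊆ S`. For every `a ∈ P`:
`β_a(Ỹ) ⊆ Ỹ`, in fact `β_a(Ỹ) = {ξ ∈ Ỹ : ξ(a) = 1}`, which is open in `Ỹ`; hence the
shift `β` restricts to a right injective action of `P` on the compact space `Ỹ` (by
continuous injective maps satisfying `β_a ∘ β_b = β_{ba}` and `β_e = id`) with open
image sets. -/
theorem stmt_16 {G : Type*} [Group G] [Countable G]
    (P : Set G) (hP1 : (1 : G) ∈ P) (hPmul : ∀ a ∈ P, ∀ b ∈ P, a * b ∈ P)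
    (hPG : ∀ g : G, ∃ a ∈ P, ∃ b ∈ P, g = a * b⁻¹)
    (S : Set G) (hPS : P ⊆ S) (hSP : ∀ s ∈ S, ∀ p ∈ P, s * p ∈ S) :
    (shiftB (1 : G) = (id : (G → Bool) → G → Bool)) ∧
    (∀ a b : G, ∀ ξ : G → Bool, shiftB a (shiftB b ξ) = shiftB (b * a) ξ) ∧
    IsCompact (Ytil S) ∧
    (∀ a ∈ P,
      Set.MapsTo (shiftB a) (Ytil S) (Ytil S) ∧
      Set.InjOn (shiftB a) (Ytil S) ∧
      Continuous (shiftB a) ∧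
      shiftB a '' Ytil S = {ξ ∈ Ytil S | ξ a = true} ∧
      IsOpen (Subtype.val ⁻¹' (shiftB a '' Ytil S) : Set (Ytil S))) := by
  have hcont : ∀ g : G, Continuous (shiftB g : (G → Bool) → G → Bool) :=
    fun g => continuous_pi fun h => continuous_apply (h * g⁻¹)
  have hcomp : ∀ a b : G, ∀ ξ : G → Bool, shiftB a (shiftB b ξ) = shiftB (b * a) ξ := by
    intro a b ξ; funext h
    simp [shiftB, mul_assoc]
  have hone : shiftB (1 : G) = (id : (G → Bool) → G → Bool) := by
    funext ξ h; simp [shiftB]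
  set Y₀ : Set (G → Bool) :=
    {ξ : G → Bool | ∃ h ∈ S, ξ = chiB {k : G | ∃ s ∈ S, k = s⁻¹ * h}} with hY₀def
  have hYtil : Ytil S = closure Y₀ := rfl
  -- every element of Ỹ takes value `true` at 1
  have hYone : ∀ ξ ∈ Ytil S, ξ 1 = true := by
    have hcl : IsClosed ((fun p : G → Bool => p 1) ⁻¹' {true}) :=
      (isClosed_discrete ({true} : Set Bool)).preimage (continuous_apply (1 : G))
    have hsub : Y₀ ⊆ {ξ : G → Bool | ξ 1 = true} := by
      rintro ξ ⟨h, hh, rfl⟩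
      show chiB _ 1 = true
      rw [chiB_eq_true_iff]
      exact ⟨h, hh, by simp⟩
    intro ξ hξ
    exact (hcl.closure_subset_iff.2 hsub) hξ
  refine ⟨hone, hcomp, isClosed_closure.isCompact, ?_⟩
  intro a ha
  have hinj : Function.Injective (shiftB a : (G → Bool) → G → Bool) := by
    intro x y hxy
    have := congrArg (shiftB a⁻¹) hxy
    rw [hcomp, hcomp, mul_inv_cancel, hone] at this
    simpa using this
  -- shiftB a maps Y₀ into Y₀
  have hmaps0 : Set.MapsTo (shiftB a) Y₀ Y₀ := by
    rintro ξ ⟨h, hh, rfl⟩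
    refine ⟨h * a, hSP h hh a ha, ?_⟩
    have hset : {k : G | k * a⁻¹ ∈ {k : G | ∃ s ∈ S, k = s⁻¹ * h}} =
        {k : G | ∃ s ∈ S, k = s⁻¹ * (h * a)} := by
      ext k
      simp only [Set.mem_setOf_eq]
      constructor
      · rintro ⟨s, hs, hks⟩
        exact ⟨s, hs, by rw [← mul_assoc, ← hks, inv_mul_cancel_right]⟩
      · rintro ⟨s, hs, hks⟩
        exact ⟨s, hs, by rw [hks]; group⟩
    rw [shiftB_chiB, hset]
  have hmaps : Set.MapsTo (shiftB a) (Ytil S) (Ytil S) := by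
    rw [hYtil]
    exact hmaps0.closure (hcont a)
  -- the image equality
  have himg : shiftB a '' Ytil S = {ξ ∈ Ytil S | ξ a = true} := by
    apply Set.Subset.antisymm
    · rintro _ ⟨η, hη, rfl⟩
      refine ⟨hmaps hη, ?_⟩
      show η (a * a⁻¹) = true
      rw [mul_inv_cancel]
      exact hYone η hη
    · rintro ξ ⟨hξY, hξa⟩
      -- U := {ζ | ζ a = true} is open
      have hU : IsOpen ((fun ζ : G → Bool => ζ a) ⁻¹' {true}) :=
        (isOpen_discrete ({true} : Set Bool)).preimage (continuous_apply a)
      have hU : IsOpen {ζ : G → Bool | ζ a = true} := hU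
      have hmem : ξ ∈ closure ({ζ : G → Bool | ζ a = true} ∩ Y₀) :=
        hU.inter_closure ⟨hξa, hξY⟩
      -- shiftB a⁻¹ maps U ∩ Y₀ into Y₀
      have hmaps' : Set.MapsTo (shiftB a⁻¹) ({ζ : G → Bool | ζ a = true} ∩ Y₀) Y₀ := by
        rintro ζ ⟨hζa, h, hh, rfl⟩
        rw [Set.mem_setOf_eq, chiB_eq_true_iff] at hζa
        obtain ⟨s, hs, has⟩ := hζa
        refine ⟨s, hs, ?_⟩
        have hset : {k : G | k * a⁻¹⁻¹ ∈ {k : G | ∃ s' ∈ S, k = s'⁻¹ * h}} =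
            {k : G | ∃ s' ∈ S, k = s'⁻¹ * s} := by
          ext k
          simp only [Set.mem_setOf_eq, inv_inv]
          constructor
          · rintro ⟨s', hs', hks'⟩
            refine ⟨s', hs', ?_⟩
            have h1 : k * a = (s'⁻¹ * s) * a := by
              rw [hks', has]; group
            exact mul_right_cancel h1
          · rintro ⟨s', hs', hks'⟩
            refine ⟨s', hs', ?_⟩
            rw [hks', has]; group
        rw [shiftB_chiB, hset]
      have hη : shiftB a⁻¹ ξ ∈ Ytil S := by
        rw [hYtil]
        exact hmaps'.closure (hcont a⁻¹) hmem
      refine ⟨shiftB a⁻¹ ξ, hη, ?_⟩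
      rw [hcomp, inv_mul_cancel, hone]; rfl
  refine ⟨hmaps, hinj.injOn, hcont a, himg, ?_⟩
  rw [himg]
  have : (Subtype.val ⁻¹' {ξ ∈ Ytil S | ξ a = true} : Set (Ytil S)) =
      {x : Ytil S | (x : G → Bool) a = true} := by
    ext x; simp [x.2]
  rw [this]
  have : IsOpen ((fun x : Ytil S => (x : G → Bool) a) ⁻¹' {true}) :=
    (isOpen_discrete ({true} : Set Bool)).preimage
      ((continuous_apply a).comp continuous_subtype_val)
  exact this
end
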